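/- Let R ⊆ [2] × P with parts R_1, R_2. If it is not the case that R_1 ≤ R_2, then the restriction Δ(2,P)|_R is contractible, so all its reduced cohomology vanishes; consequently β_{i,R}(L(2,P)) can be nonzero only if R_1 ≤ R_2. -/

import Mathlib

/-!
Common infrastructure: abstract simplicial complexes, geometric realization,
homotopy equivalence, reduced simplicial cohomology, squarefree monomial ideals
(encoded as upward closed families of finite sets), Koszul-complex multigraded
Betti numbers, and letterplace ideals of posets.
-/

noncomputable section

open Finset

attribute [local instance] Classical.propDecidable

universe u v w

/-- An abstract simplicial complex on the vertex type `V`: a collection of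
finite subsets of `V` (the faces) closed under taking subsets. -/
structure SComplex (V : Type u) where
  faces : Set (Finset V)
  down_closed : ∀ {F G : Finset V}, F ∈ faces → G ⊆ F → G ∈ faces

namespace SComplex

/-- The geometric realization of a simplicial complex: the subspace of `V → ℝ`
consisting of the convex weight functions supported on a face. -/
def realization {V : Type u} [Fintype V] (X : SComplex V) : Set (V → ℝ) :=
  {f | (∀ v, 0 ≤ f v) ∧ (∑ v, f v) = 1 ∧ ∃ F ∈ X.faces, ∀ v, f v ≠ 0 → v ∈ F}

/-- Two simplicial complexes are homotopy equivalent if their geometric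
realizations are homotopy equivalent topological spaces. -/
def HEquiv {V : Type u} {W : Type v} [Fintype V] [Fintype W]
    (X : SComplex V) (Y : SComplex W) : Prop :=
  Nonempty (ContinuousMap.HomotopyEquiv X.realization Y.realization)

/-- Isomorphism ("equality up to relabeling of vertices") of simplicial
complexes: an order isomorphism between the face posets. -/
def IsIsomorphic {V : Type u} {W : Type v} (X : SComplex V) (Y : SComplex W) : Prop :=
  Nonempty ({F : Finset V // F ∈ X.faces} ≃o {G : Finset W // G ∈ Y.faces})

/-- The induced subcomplex on a subset `S` of the vertex set. -/
def restrict {V : Type u} (X : SComplex V) (S : Set V) : SComplex V where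
  faces := {F | F ∈ X.faces ∧ ∀ v ∈ F, v ∈ S}
  down_closed := by
    intro F G hF hGF
    exact ⟨X.down_closed hF.1 hGF, fun v hv => hF.2 v (hGF hv)⟩

/-- The join of two simplicial complexes (on the disjoint union of the two
vertex types). -/
def join {V : Type u} {W : Type v} (X : SComplex V) (Y : SComplex W) :
    SComplex (V ⊕ W) where
  faces := {F | F.preimage Sum.inl Sum.inl_injective.injOn ∈ X.faces ∧
                F.preimage Sum.inr Sum.inr_injective.injOn ∈ Y.faces}
  down_closed := by
    intro F G hF hGF
    constructor
    · exact X.down_closed hF.1 fun x hx => by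
        simp only [Finset.mem_preimage] at hx ⊢
        exact hGF hx
    · exact Y.down_closed hF.2 fun x hx => by
        simp only [Finset.mem_preimage] at hx ⊢
        exact hGF hx

/-- The join of a finite family of simplicial complexes on pairwise disjoint
vertex types. -/
def bigJoin {ι : Type u} {V : ι → Type v} (X : ∀ i, SComplex (V i)) :
    SComplex (Σ i, V i) where
  faces := {F | ∀ i, F.preimage (Sigma.mk i) sigma_mk_injective.injOn ∈ (X i).faces}
  down_closed := by
    intro F G hF hGF i
    exact (X i).down_closed (hF i) fun x hx => by
      simp only [Finset.mem_preimage] at hx ⊢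
      exact hGF hx

/-- The simplicial complex consisting of two disjoint points. -/
def twoPoint : SComplex Bool where
  faces := {F | F.card ≤ 1}
  down_closed := by
    intro F G hF hGF
    exact le_trans (Finset.card_le_card hGF) hF

/-- The suspension of a simplicial complex: its join with two points. -/
def suspension {V : Type u} (X : SComplex V) : SComplex (V ⊕ Bool) :=
  join X twoPoint

/-- Vertex type of the `m`-fold iterated suspension. -/
def SuspType (V : Type u) : ℕ → Type u
  | 0 => V
  | m + 1 => SuspType V m ⊕ Bool

/-- The `m`-fold iterated suspension of a simplicial complex. -/
def iterSusp {V : Type u} (X : SComplex V) : (m : ℕ) → SComplex (SuspType V m)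
  | 0 => X
  | m + 1 => suspension (iterSusp X m)

end SComplex

/-- Position of `x` with respect to a finite set: the number of elements of `F`
preceding `x` in a fixed well-ordering of the vertex type.  Used for the signs
in (co)chain complexes. -/
def vpos {V : Type u} (F : Finset V) (x : V) : ℕ :=
  (F.filter fun w => WellOrderingRel w x).card

namespace SComplex

variable (k : Type w) [Field k]

/-- The faces of dimension `i` (i.e. of cardinality `i + 1`), `i ∈ ℤ`. -/
abbrev Face {V : Type u} (X : SComplex V) (i : ℤ) : Type u :=
  {F : Finset V // F ∈ X.faces ∧ (F.card : ℤ) = i + 1}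

/-- Reduced simplicial `i`-cochains of `X` with coefficients in `k`
(the empty face in dimension `-1` is included). -/
abbrev cochain {V : Type u} (X : SComplex V) (i : ℤ) : Type (max u w) :=
  Face X i → k

/-- Evaluation of a cochain on an arbitrary finite set (zero if the set is not
a face of the appropriate dimension). -/
def evalC {V : Type u} {X : SComplex V} {i : ℤ} (f : cochain k X i) (F : Finset V) : k :=
  if h : F ∈ X.faces ∧ (F.card : ℤ) = i + 1 then f ⟨F, h⟩ else 0

theorem evalC_add {V : Type u} {X : SComplex V} {i : ℤ} (f g : cochain k X i)
    (F : Finset V) : evalC k (f + g) F = evalC k f F + evalC k g F := by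
  unfold evalC
  split_ifs <;> simp

theorem evalC_smul {V : Type u} {X : SComplex V} {i : ℤ} (s : k) (f : cochain k X i)
    (F : Finset V) : evalC k (s • f) F = s * evalC k f F := by
  unfold evalC
  split_ifs <;> simp

/-- The simplicial coboundary map on reduced cochains. -/
def coboundary {V : Type u} (X : SComplex V) (i : ℤ) :
    cochain k X i →ₗ[k] cochain k X (i + 1) where
  toFun f F := ∑ v ∈ F.1, ((-1 : k) ^ vpos F.1 v) * evalC k f (F.1.erase v)
  map_add' f g := by
    funext F
    show (∑ v ∈ F.1, ((-1 : k) ^ vpos F.1 v) * evalC k (f + g) (F.1.erase v))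
      = (∑ v ∈ F.1, ((-1 : k) ^ vpos F.1 v) * evalC k f (F.1.erase v))
      + (∑ v ∈ F.1, ((-1 : k) ^ vpos F.1 v) * evalC k g (F.1.erase v))
    rw [← Finset.sum_add_distrib]
    exact Finset.sum_congr rfl fun v _ => by rw [evalC_add, mul_add]
  map_smul' s f := by
    funext F
    show (∑ v ∈ F.1, ((-1 : k) ^ vpos F.1 v) * evalC k (s • f) (F.1.erase v))
      = s * ∑ v ∈ F.1, ((-1 : k) ^ vpos F.1 v) * evalC k f (F.1.erase v)
    rw [Finset.mul_sum]
    exact Finset.sum_congr rfl fun v _ => by rw [evalC_smul]; ring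

/-- The dimension of the `i`-th reduced simplicial cohomology of `X` with
coefficients in the field `k` (computed as `dim ker d^i - dim im d^(i-1)`). -/
def redCohomDim {V : Type u} (X : SComplex V) (i : ℤ) : ℕ :=
  Module.finrank k (LinearMap.ker (coboundary k X i)) -
    Module.finrank k (LinearMap.range (coboundary k X (i - 1)))

/-- The generating series `t·H̃(X,t) = ∑_{i ≥ -1} t^{i+1} dim_k H̃^i(X;k)`,
an element of `ℕ⟦t⟧`. -/
def hSeries {V : Type u} (X : SComplex V) : PowerSeries ℕ :=
  PowerSeries.mk fun m => redCohomDim k X ((m : ℤ) - 1)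

end SComplex

/-- A squarefree monomial ideal on the set of variables `W`, encoded by the
upward closed family of the supports of the squarefree monomials belonging
to it. -/
structure SqfIdeal (W : Type u) where
  carrier : Set (Finset W)
  up_closed : ∀ {S T : Finset W}, S ∈ carrier → S ⊆ T → T ∈ carrier

namespace SqfIdeal

/-- The basis of the degree-`R` strand of the Koszul complex `K(x;I)` in
homological degree `i`. -/
abbrev KBasis {W : Type u} (I : SqfIdeal W) (R : Finset W) (i : ℤ) : Type u :=
  {S : Finset W // S ⊆ R ∧ (S.card : ℤ) = i ∧ R \ S ∈ I.carrier}

/-- The degree-`R` strand of the Koszul complex of `I`, in homological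
degree `i`, with coefficients in `k`. -/
abbrev kchain (k : Type w) [Field k] {W : Type u} (I : SqfIdeal W) (R : Finset W)
    (i : ℤ) : Type (max u w) :=
  KBasis I R i → k

variable (k : Type w) [Field k]

/-- Evaluation of a Koszul chain on an arbitrary finite set. -/
def evalK {W : Type u} {I : SqfIdeal W} {R : Finset W} {i : ℤ}
    (f : kchain k I R i) (S : Finset W) : k :=
  if h : S ⊆ R ∧ (S.card : ℤ) = i ∧ R \ S ∈ I.carrier then f ⟨S, h⟩ else 0

theorem evalK_add {W : Type u} {I : SqfIdeal W} {R : Finset W} {i : ℤ}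
    (f g : kchain k I R i) (S : Finset W) :
    evalK k (f + g) S = evalK k f S + evalK k g S := by
  unfold evalK
  split_ifs <;> simp

theorem evalK_smul {W : Type u} {I : SqfIdeal W} {R : Finset W} {i : ℤ}
    (s : k) (f : kchain k I R i) (S : Finset W) :
    evalK k (s • f) S = s * evalK k f S := by
  unfold evalK
  split_ifs <;> simp

/-- The Koszul differential on the degree-`R` strand (as a map of the dual
function spaces). -/
def koszulD {W : Type u} (I : SqfIdeal W) (R : Finset W) (i : ℤ) :
    kchain k I R i →ₗ[k] kchain k I R (i - 1) where
  toFun f S := ∑ v ∈ R \ S.1, ((-1 : k) ^ vpos S.1 v) * evalK k f (insert v S.1)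
  map_add' f g := by
    funext S
    show (∑ v ∈ R \ S.1, ((-1 : k) ^ vpos S.1 v) * evalK k (f + g) (insert v S.1))
      = (∑ v ∈ R \ S.1, ((-1 : k) ^ vpos S.1 v) * evalK k f (insert v S.1))
      + (∑ v ∈ R \ S.1, ((-1 : k) ^ vpos S.1 v) * evalK k g (insert v S.1))
    rw [← Finset.sum_add_distrib]
    exact Finset.sum_congr rfl fun v _ => by rw [evalK_add, mul_add]
  map_smul' s f := by
    funext S
    show (∑ v ∈ R \ S.1, ((-1 : k) ^ vpos S.1 v) * evalK k (s • f) (insert v S.1))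
      = s * ∑ v ∈ R \ S.1, ((-1 : k) ^ vpos S.1 v) * evalK k f (insert v S.1)
    rw [Finset.mul_sum]
    exact Finset.sum_congr rfl fun v _ => by rw [evalK_smul]; ring

end SqfIdeal

/-- The multigraded Betti number `β_{i,R}(I) = dim_k Tor_i(I,k)_R` of a
squarefree monomial ideal in the squarefree multidegree `R`, computed as the
dimension of the `i`-th homology of the degree-`R` strand of the Koszul
complex. -/
def multiBetti (k : Type w) [Field k] {W : Type u} (I : SqfIdeal W) (i : ℤ)
    (R : Finset W) : ℕ :=
  Module.finrank k (LinearMap.ker (SqfIdeal.koszulD k I R i)) -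
    Module.finrank k (LinearMap.range (SqfIdeal.koszulD k I R (i + 1)))

/-- The graded Betti number `β_{i,j}(I) = dim_k Tor_i(I,k)_j` of a squarefree
monomial ideal: the sum of the multigraded Betti numbers over the (squarefree)
multidegrees of cardinality `j`. -/
def gradedBetti (k : Type w) [Field k] {W : Type u} [Fintype W] (I : SqfIdeal W)
    (i : ℤ) (j : ℤ) : ℕ :=
  if 0 ≤ j then
    ∑ R ∈ Finset.powersetCard j.toNat (Finset.univ : Finset W), multiBetti k I i R
  else 0

/-- The `n`-th letterplace ideal `L(n,P)` of a poset `P`: the squarefree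
monomial ideal on the variables `x_{(i,p)}`, `(i,p) ∈ [n] × P`, generated by
the monomials `x_{(1,p₁)} ⋯ x_{(n,pₙ)}` with `p₁ ≤ p₂ ≤ ⋯ ≤ pₙ` in `P`. -/
def letterplace (n : ℕ) (P : Type u) [PartialOrder P] : SqfIdeal (Fin n × P) where
  carrier := {T | ∃ c : Fin n → P, Monotone c ∧ ∀ i, (i, c i) ∈ T}
  up_closed := by
    rintro S T ⟨c, hc, hm⟩ hST
    exact ⟨c, hc, fun i => hST (hm i)⟩

/-- The `i`-th part `R_i ⊆ P` of a multidegree `R ⊆ [n] × P`. -/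
def part {n : ℕ} {P : Type u} (R : Finset (Fin n × P)) (i : Fin n) : Finset P :=
  (R.filter fun q => q.1 = i).image Prod.snd

/-- The set of maximal elements of the induced subposet on `A`. -/
def maxSet {P : Type u} [PartialOrder P] (A : Finset P) : Finset P :=
  A.filter fun a => ∀ b ∈ A, a ≤ b → a = b

/-- The set of minimal elements of the induced subposet on `A`. -/
def minSet {P : Type u} [PartialOrder P] (A : Finset P) : Finset P :=
  A.filter fun a => ∀ b ∈ A, b ≤ a → a = b

/-- The transitive order `A ≤ B` on subsets of a poset: every maximal element
of `A` is below some minimal element of `B`, and every minimal element of `B`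
is above some maximal element of `A`. -/
def subsetLE {P : Type u} [PartialOrder P] (A B : Finset P) : Prop :=
  (∀ a ∈ maxSet A, ∃ b ∈ minSet B, a ≤ b) ∧
  (∀ b ∈ minSet B, ∃ a ∈ maxSet A, a ≤ b)

/-- The independence complex of the bipartite graph on two disjoint copies of
`P`, with left vertex set `A`, right vertex set `B`, and edges the pairs
`(p, q) ∈ A × B` with `p ≤ q` in `P`. -/
def XComplex {P : Type u} [PartialOrder P] (A B : Finset P) : SComplex (P ⊕ P) where
  faces := {F | (∀ x ∈ F, Sum.elim (· ∈ A) (· ∈ B) x) ∧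
                ∀ p q : P, Sum.inl p ∈ F → Sum.inr q ∈ F → ¬ p ≤ q}
  down_closed := by
    intro F G hF hGF
    exact ⟨fun x hx => hF.1 x (hGF hx), fun p q hp hq => hF.2 p q (hGF hp) (hGF hq)⟩

/-- `Y₁`: the simplicial complex on `A` whose faces are the subsets `F ⊆ A`
such that some `b ∈ B` dominates no element of `F`. -/
def Y1Complex {P : Type u} [PartialOrder P] (A B : Finset P) : SComplex P where
  faces := {F | (∀ x ∈ F, x ∈ A) ∧ ∃ b ∈ B, ∀ a ∈ F, ¬ a ≤ b}
  down_closed := by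
    rintro F G ⟨hFA, b, hb, hFb⟩ hGF
    exact ⟨fun x hx => hFA x (hGF hx), b, hb, fun a ha => hFb a (hGF ha)⟩

/-- `Y₂`: the simplicial complex on `B` whose faces are the subsets `F ⊆ B`
such that some `a ∈ A` is dominated by no element of `F`. -/
def Y2Complex {P : Type u} [PartialOrder P] (A B : Finset P) : SComplex P where
  faces := {F | (∀ x ∈ F, x ∈ B) ∧ ∃ a ∈ A, ∀ b ∈ F, ¬ a ≤ b}
  down_closed := by
    rintro F G ⟨hFB, a, ha, hFa⟩ hGF
    exact ⟨fun x hx => hFB x (hGF hx), a, ha, fun b hb => hFa b (hGF hb)⟩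

/-- The restriction `Δ(n,P)|_R` of the Stanley–Reisner complex of the
letterplace ideal `L(n,P)` to the vertex set `R`. -/
def deltaRes (n : ℕ) (P : Type u) [PartialOrder P] (R : Finset (Fin n × P)) :
    SComplex (Fin n × P) where
  faces := {F | F ⊆ R ∧ ¬ ∃ c : Fin n → P, Monotone c ∧ ∀ i, (i, c i) ∈ F}
  down_closed := by
    rintro F G ⟨hFR, hF⟩ hGF
    exact ⟨hGF.trans hFR, fun ⟨c, hc, hm⟩ => hF ⟨c, hc, fun i => hGF (hm i)⟩⟩

/-- `A` is a maximal antichain of the poset `P`. -/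
def LPIsMaxAntichain {P : Type u} [PartialOrder P] (A : Finset P) : Prop :=
  IsAntichain (· ≤ ·) (A : Set P) ∧
    ∀ B : Finset P, IsAntichain (· ≤ ·) (B : Set P) → A ⊆ B → A = B

/-- The maximal cardinality of an antichain in the finite poset `P`. -/
def maxAntichainCard (P : Type u) [PartialOrder P] [Fintype P] : ℕ :=
  Finset.sup (Finset.univ.filter fun A : Finset P => IsAntichain (· ≤ ·) (A : Set P))
    Finset.card

/-- The independence complex of a bipartite graph, with parts `A` and `B` and
edge relation `E`. -/
def bipIndep {A : Type u} {B : Type v} (E : A → B → Prop) : SComplex (A ⊕ B) where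
  faces := {F | ∀ a b, Sum.inl a ∈ F → Sum.inr b ∈ F → ¬ E a b}
  down_closed := by
    intro F G hF hGF a b ha hb
    exact hF a b (hGF ha) (hGF hb)

section SignLemmas
variable {V : Type u} {k : Type w} [Field k]

lemma wr_irrefl (v : V) : ¬ WellOrderingRel v v :=
  haveI := (WellOrderingRel.isWellOrder (α := V))
  irrefl_of WellOrderingRel v

lemma wr_asymm {v w : V} (h1 : WellOrderingRel v w) (h2 : WellOrderingRel w v) : False :=
  haveI := (WellOrderingRel.isWellOrder (α := V))
  wr_irrefl v (IsTrans.trans _ _ _ h1 h2)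

lemma wr_tri (v w : V) (h : v ≠ w) : WellOrderingRel v w ∨ WellOrderingRel w v := by
  haveI := (WellOrderingRel.isWellOrder (α := V))
  rcases trichotomous_of WellOrderingRel v w with h1 | h1 | h1
  · exact Or.inl h1
  · exact absurd h1 h
  · exact Or.inr h1

lemma vpos_insert_self (z : V) (F : Finset V) : vpos (insert z F) z = vpos F z := by
  unfold vpos
  congr 1
  ext w
  simp only [Finset.mem_filter, Finset.mem_insert]
  constructor
  · rintro ⟨(rfl | hw), h2⟩
    · exact absurd h2 (wr_irrefl w)
    · exact ⟨hw, h2⟩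
  · rintro ⟨hw, h2⟩; exact ⟨Or.inr hw, h2⟩

lemma vpos_erase_self (z : V) (F : Finset V) : vpos (F.erase z) z = vpos F z := by
  unfold vpos
  have hnm : z ∉ F.filter (fun w => WellOrderingRel w z) :=
    fun h => wr_irrefl z (Finset.mem_filter.1 h).2
  rw [Finset.filter_erase, Finset.erase_eq_of_notMem hnm]

lemma vpos_insert {z : V} {F : Finset V} (hz : z ∉ F) (v : V) :
    vpos (insert z F) v = vpos F v + if WellOrderingRel z v then 1 else 0 := by
  unfold vpos
  by_cases h : WellOrderingRel z v
  · rw [Finset.filter_insert, if_pos h,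
      Finset.card_insert_of_notMem (fun hm => hz (Finset.mem_filter.1 hm).1), if_pos h]
  · rw [Finset.filter_insert, if_neg h, if_neg h, add_zero]

lemma vpos_erase {v : V} {F : Finset V} (hv : v ∈ F) (w : V) :
    vpos F w = vpos (F.erase v) w + if WellOrderingRel v w then 1 else 0 := by
  unfold vpos
  rw [Finset.filter_erase]
  by_cases h : WellOrderingRel v w
  · have hmem : v ∈ F.filter (fun x => WellOrderingRel x w) := Finset.mem_filter.2 ⟨hv, h⟩
    rw [if_pos h, Finset.card_erase_of_mem hmem]
    have h2 : (F.filter fun x => WellOrderingRel x w).card ≠ 0 :=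
      Finset.card_ne_zero_of_mem hmem
    omega
  · have hnm : v ∉ F.filter (fun x => WellOrderingRel x w) :=
      fun hm => h (Finset.mem_filter.1 hm).2
    rw [if_neg h, Finset.erase_eq_of_notMem hnm, add_zero]

lemma sign_flip {F : Finset V} {v z : V} (hv : v ∈ F) (hz : z ∉ F) :
    (-1 : k) ^ (vpos F z + vpos (insert z F) v) = -(-1 : k) ^ (vpos F v + vpos (F.erase v) z) := by
  have hvz : v ≠ z := fun h => hz (h ▸ hv)
  rw [vpos_insert hz v, vpos_erase hv z]
  rcases wr_tri z v (Ne.symm hvz) with h | h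
  · have h2 : ¬ WellOrderingRel v z := fun h2 => wr_asymm h h2
    rw [if_pos h, if_neg h2, add_zero, pow_add, pow_add, pow_succ]
    ring
  · have h2 : ¬ WellOrderingRel z v := fun h2 => wr_asymm h h2
    rw [if_neg h2, if_pos h, add_zero, pow_add, pow_add, pow_succ]
    ring

lemma sign_flip₂ {F : Finset V} {v w : V} (hv : v ∈ F) (hw : w ∈ F) (hvw : v ≠ w) :
    (-1:k) ^ (vpos F v + vpos (F.erase v) w) = -(-1:k) ^ (vpos F w + vpos (F.erase w) v) := by
  have h1 : vpos F w = vpos (F.erase v) w + ite (WellOrderingRel v w) 1 0 := vpos_erase hv w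
  have h2 : vpos F v = vpos (F.erase w) v + ite (WellOrderingRel w v) 1 0 := vpos_erase hw v
  rw [h1, h2]
  rcases wr_tri v w hvw with h | h
  · have hn : ¬ WellOrderingRel w v := fun hx => wr_asymm h hx
    rw [if_pos h, if_neg hn, add_zero, pow_add, pow_add, pow_add, pow_succ]
    ring
  · have hn : ¬ WellOrderingRel v w := fun hx => wr_asymm h hx
    rw [if_neg hn, if_pos h, add_zero, pow_add, pow_add, pow_add, pow_succ]
    ring

lemma sign_flip₃ {S : Finset V} {v w : V} (hv : v ∉ S) (hw : w ∉ S) (hvw : v ≠ w) :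
    (-1:k) ^ (vpos S v + vpos (insert v S) w) = -(-1:k) ^ (vpos S w + vpos (insert w S) v) := by
  rw [vpos_insert hv w, vpos_insert hw v]
  rcases wr_tri v w hvw with h | h
  · have hn : ¬ WellOrderingRel w v := fun hx => wr_asymm h hx
    rw [if_pos h, if_neg hn, add_zero, pow_add, pow_add, pow_add, pow_succ]
    ring
  · have hn : ¬ WellOrderingRel v w := fun hx => wr_asymm h hx
    rw [if_neg hn, if_pos h, add_zero, pow_add, pow_add, pow_add, pow_succ]
    ring

lemma sum_pair_cancel {M : Type v} [AddCommGroup M] (S : Finset V) (t : V → V → M)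
    (ht : ∀ v ∈ S, ∀ w ∈ S, v ≠ w → t v w = - t w v) :
    ∑ v ∈ S, ∑ w ∈ S.erase v, t v w = 0 := by
  have key : ∑ v ∈ S, ∑ w ∈ S.erase v, t v w
      = ∑ p ∈ (S ×ˢ S).filter (fun p => p.2 ≠ p.1), t p.1 p.2 := by
    rw [Finset.sum_filter, Finset.sum_product]
    refine Finset.sum_congr rfl fun v hv => ?_
    rw [← Finset.sum_filter, Finset.filter_ne']
  rw [key]
  refine Finset.sum_involution (fun p _ => p.swap) ?_ ?_ ?_ ?_
  · intro p hp
    obtain ⟨hmem, hne⟩ := Finset.mem_filter.1 hp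
    obtain ⟨h1, h2⟩ := Finset.mem_product.1 hmem
    rw [ht p.1 h1 p.2 h2 (Ne.symm hne)]
    exact neg_add_cancel _
  · intro p hp _
    intro hs
    exact (Finset.mem_filter.1 hp).2 (congrArg Prod.fst hs)
  · intro p hp
    obtain ⟨hmem, hne⟩ := Finset.mem_filter.1 hp
    obtain ⟨h1, h2⟩ := Finset.mem_product.1 hmem
    exact Finset.mem_filter.2 ⟨Finset.mem_product.2 ⟨h2, h1⟩, Ne.symm hne⟩
  · intro p hp
    exact Prod.swap_swap p

end SignLemmas

section MasterE
variable {V : Type u} (k : Type w) [Field k]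

lemma evalC_pos {X : SComplex V} {i : ℤ} (f : SComplex.cochain k X i) {F : Finset V}
    (h : F ∈ X.faces ∧ (F.card : ℤ) = i + 1) : SComplex.evalC k f F = f ⟨F, h⟩ := dif_pos h

lemma evalC_zero_card {X : SComplex V} {i : ℤ} (f : SComplex.cochain k X i) {F : Finset V}
    (h : (F.card : ℤ) ≠ i + 1) : SComplex.evalC k f F = 0 :=
  dif_neg (fun hh => h hh.2)

/-- The explicit contracting homotopy with apex `z`. -/
def sC (X : SComplex V) (z : V) (m : ℤ) :
    SComplex.cochain k X (m+1) →ₗ[k] SComplex.cochain k X m where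
  toFun f G := (-1:k) ^ (vpos G.1 z) * SComplex.evalC k f (insert z G.1)
  map_add' f g := by
    funext G
    show (-1:k) ^ (vpos G.1 z) * SComplex.evalC k (f + g) (insert z G.1) = _
    rw [SComplex.evalC_add]
    show _ = (-1:k) ^ (vpos G.1 z) * SComplex.evalC k f (insert z G.1)
      + (-1:k) ^ (vpos G.1 z) * SComplex.evalC k g (insert z G.1)
    ring
  map_smul' c f := by
    funext G
    show (-1:k) ^ (vpos G.1 z) * SComplex.evalC k (c • f) (insert z G.1) = _
    rw [SComplex.evalC_smul]
    show _ = c * ((-1:k) ^ (vpos G.1 z) * SComplex.evalC k f (insert z G.1))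
    ring

lemma coboundary_apply (X : SComplex V) (i : ℤ) (f : SComplex.cochain k X i)
    (F : SComplex.Face X (i+1)) :
    SComplex.coboundary k X i f F
      = ∑ v ∈ F.1, ((-1:k) ^ vpos F.1 v) * SComplex.evalC k f (F.1.erase v) := rfl

lemma sC_apply (X : SComplex V) (z : V) (m : ℤ) (f : SComplex.cochain k X (m+1))
    (G : SComplex.Face X m) :
    sC k X z m f G = (-1:k) ^ (vpos G.1 z) * SComplex.evalC k f (insert z G.1) := rfl

lemma master_E (X : SComplex V) (z : V) (mark : Finset V → Prop)
    (hm1 : ∀ F : Finset V, mark (insert z F) → mark F)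
    (hm2 : ∀ (F : Finset V) (v : V), mark (F.erase v) → mark F)
    (hcone : ∀ F ∈ X.faces, mark F → z ∉ F → insert z F ∈ X.faces)
    (j : ℤ) (f : SComplex.cochain k X (j+1))
    (hf : ∀ G : SComplex.Face X (j+1), ¬ mark G.1 → f G = 0) :
    SComplex.coboundary k X j (sC k X z j f)
      + sC k X z (j+1) (SComplex.coboundary k X (j+1) f) = f := by
  have hfe : ∀ T : Finset V, ¬ mark T → SComplex.evalC k f T = 0 := by
    intro T hT
    unfold SComplex.evalC
    split
    · exact hf _ hT
    · rfl
  funext F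
  obtain ⟨S, hS⟩ := F
  obtain ⟨hSf, hScard⟩ := hS
  rw [Pi.add_apply, coboundary_apply, sC_apply]
  by_cases hmS : mark S
  · by_cases hzS : z ∈ S
    · -- apex already in the face
      have t2 : SComplex.evalC k (SComplex.coboundary k X (j+1) f) (insert z S) = 0 := by
        rw [Finset.insert_eq_self.2 hzS]
        exact evalC_zero_card k _ (by rw [hScard]; intro hc; omega)
      rw [t2, mul_zero, add_zero]
      have hcard : ((S.erase z).card : ℤ) = j + 1 := by
        rw [Finset.card_erase_of_mem hzS, Nat.cast_sub (Finset.card_pos.2 ⟨z, hzS⟩)]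
        rw [hScard]; ring
      have hgate : S.erase z ∈ X.faces ∧ ((S.erase z).card : ℤ) = j + 1 :=
        ⟨X.down_closed hSf (Finset.erase_subset z S), hcard⟩
      rw [Finset.sum_eq_single_of_mem z hzS ?side]
      case side =>
        intro v hv hvz
        have hzv : z ∈ S.erase v := Finset.mem_erase.2 ⟨Ne.symm hvz, hzS⟩
        have h0 : SComplex.evalC k (sC k X z j f) (S.erase v) = 0 := by
          unfold SComplex.evalC
          split
          · show (-1:k) ^ (vpos (S.erase v) z) * SComplex.evalC k f (insert z (S.erase v)) = 0
            have he : SComplex.evalC k f (insert z (S.erase v)) = 0 := by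
              rw [Finset.insert_eq_self.2 hzv]
              apply evalC_zero_card
              rw [Finset.card_erase_of_mem hv, Nat.cast_sub (Finset.card_pos.2 ⟨v, hv⟩), hScard]
              intro hc; omega
            rw [he, mul_zero]
          · rfl
        rw [h0, mul_zero]
      -- main term
      have h1 : SComplex.evalC k (sC k X z j f) (S.erase z) = sC k X z j f ⟨S.erase z, hgate⟩ :=
        evalC_pos k _ hgate
      rw [h1, sC_apply, Finset.insert_erase hzS, vpos_erase_self,
        evalC_pos k f ⟨hSf, hScard⟩, ← mul_assoc, ← pow_add]
      have : Even (vpos S z + vpos S z) := ⟨vpos S z, rfl⟩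
      rw [this.neg_one_pow, one_mul]
    · -- apex not in the face : cancellation case
      have hzface : insert z S ∈ X.faces := hcone S hSf hmS hzS
      have hzcard : ((insert z S).card : ℤ) = (j + 1) + 1 + 1 := by
        rw [Finset.card_insert_of_notMem hzS]
        push_cast
        omega
      have e2 : SComplex.evalC k (SComplex.coboundary k X (j+1) f) (insert z S)
          = ∑ v ∈ insert z S, ((-1:k) ^ vpos (insert z S) v)
              * SComplex.evalC k f ((insert z S).erase v) := by
        rw [evalC_pos k _ ⟨hzface, hzcard⟩, coboundary_apply]
      rw [e2, Finset.mul_sum, Finset.sum_insert hzS]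
      have e1 : ∀ v ∈ S, SComplex.evalC k (sC k X z j f) (S.erase v)
          = (-1:k) ^ (vpos (S.erase v) z) * SComplex.evalC k f (insert z (S.erase v)) := by
        intro v hv
        have hcard : ((S.erase v).card : ℤ) = j + 1 := by
          rw [Finset.card_erase_of_mem hv, Nat.cast_sub (Finset.card_pos.2 ⟨v, hv⟩), hScard]
          ring
        rw [evalC_pos k _ ⟨X.down_closed hSf (Finset.erase_subset v S), hcard⟩, sC_apply]
      rw [Finset.sum_congr rfl (fun v hv => by rw [e1 v hv])]
      rw [Finset.erase_insert hzS, vpos_insert_self, evalC_pos k f ⟨hSf, hScard⟩]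
      have hcancel : (∑ v ∈ S, ((-1:k) ^ vpos S v)
            * ((-1:k) ^ (vpos (S.erase v) z) * SComplex.evalC k f (insert z (S.erase v))))
          + (∑ v ∈ S, (-1:k) ^ (vpos S z)
            * (((-1:k) ^ vpos (insert z S) v) * SComplex.evalC k f ((insert z S).erase v))) = 0 := by
        rw [← Finset.sum_add_distrib]
        refine Finset.sum_eq_zero fun v hv => ?_
        have hzv : z ≠ v := fun h => hzS (h ▸ hv)
        rw [Finset.erase_insert_of_ne hzv, ← mul_assoc, ← mul_assoc, ← pow_add, ← pow_add,
          sign_flip hv hzS]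
        ring
      have hcc : (-1:k) ^ (vpos S z) * (-1:k) ^ (vpos S z) = 1 := by
        rw [← pow_add]
        exact (Even.neg_one_pow ⟨vpos S z, rfl⟩)
      linear_combination hcancel + f ⟨S, ⟨hSf, hScard⟩⟩ * hcc
  · -- unmarked face : everything vanishes
    rw [hf ⟨S, hSf, hScard⟩ hmS]
    have t1 : ∀ v ∈ S, ((-1:k) ^ vpos S v) * SComplex.evalC k (sC k X z j f) (S.erase v) = 0 := by
      intro v hv
      have h0 : SComplex.evalC k (sC k X z j f) (S.erase v) = 0 := by
        unfold SComplex.evalC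
        split
        · show (-1:k) ^ (vpos (S.erase v) z) * SComplex.evalC k f (insert z (S.erase v)) = 0
          rw [hfe _ (fun hm => hmS (hm2 S v (hm1 (S.erase v) hm))), mul_zero]
        · rfl
      rw [h0, mul_zero]
    have t2 : SComplex.evalC k (SComplex.coboundary k X (j+1) f) (insert z S) = 0 := by
      unfold SComplex.evalC
      split
      case isTrue h =>
        rw [coboundary_apply]
        refine Finset.sum_eq_zero fun v hv => ?_
        rw [hfe _ (fun hm => hmS (hm1 S (hm2 (insert z S) v hm))), mul_zero]
      case isFalse => rfl
    rw [Finset.sum_eq_zero t1, t2, mul_zero, add_zero]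

lemma cob_cob (X : SComplex V) (j : ℤ) (c : SComplex.cochain k X j)
    (F : SComplex.Face X (j+1+1)) :
    SComplex.coboundary k X (j+1) (SComplex.coboundary k X j c) F = 0 := by
  obtain ⟨S, hSf, hScard⟩ := F
  rw [coboundary_apply]
  have expand : ∀ v ∈ S, SComplex.evalC k (SComplex.coboundary k X j c) (S.erase v)
      = ∑ w ∈ S.erase v, ((-1:k) ^ vpos (S.erase v) w) * SComplex.evalC k c ((S.erase v).erase w) := by
    intro v hv
    have hcard : ((S.erase v).card : ℤ) = j + 1 + 1 := by
      rw [Finset.card_erase_of_mem hv, Nat.cast_sub (Finset.card_pos.2 ⟨v, hv⟩), hScard]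
      ring
    rw [evalC_pos k _ ⟨X.down_closed hSf (Finset.erase_subset v S), hcard⟩, coboundary_apply]
  calc ∑ v ∈ S, ((-1:k) ^ vpos S v) * SComplex.evalC k (SComplex.coboundary k X j c) (S.erase v)
      = ∑ v ∈ S, ∑ w ∈ S.erase v,
          ((-1:k) ^ vpos S v) * (((-1:k) ^ vpos (S.erase v) w)
            * SComplex.evalC k c ((S.erase v).erase w)) := by
        refine Finset.sum_congr rfl fun v hv => ?_
        rw [expand v hv, Finset.mul_sum]
    _ = 0 := by
        apply sum_pair_cancel
        intro v hv w hw hvw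
        rw [Finset.erase_right_comm, ← mul_assoc, ← mul_assoc, ← pow_add, ← pow_add,
          sign_flip₂ hv hw hvw]
        ring

end MasterE

section ExactE
variable {V : Type u} (k : Type w) [Field k]

/-- Restriction of a cochain to the subcomplex obtained by deleting `d`. -/
def resC (X : SComplex V) (d : V) (m : ℤ)
    (f : SComplex.cochain k X m) : SComplex.cochain k (X.restrict {v | v ≠ d}) m :=
  fun G => f ⟨G.1, G.2.1.1, G.2.2⟩

/-- Extension by zero of a cochain of the subcomplex obtained by deleting `d`. -/
def extC (X : SComplex V) (d : V) (m : ℤ)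
    (f : SComplex.cochain k (X.restrict {v | v ≠ d}) m) : SComplex.cochain k X m :=
  fun F => if h : F.1 ∈ (X.restrict {v | v ≠ d}).faces then f ⟨F.1, h, F.2.2⟩ else 0

lemma evalC_resC (X : SComplex V) (d : V) (m : ℤ) (f : SComplex.cochain k X m)
    (T : Finset V) (hT : d ∉ T) :
    SComplex.evalC k (resC k X d m f) T = SComplex.evalC k f T := by
  by_cases h : T ∈ X.faces ∧ (T.card : ℤ) = m + 1
  · have h' : T ∈ (X.restrict {v | v ≠ d}).faces ∧ (T.card : ℤ) = m + 1 :=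
      ⟨⟨h.1, fun v hv hvd => hT (hvd ▸ hv)⟩, h.2⟩
    rw [evalC_pos k _ h', evalC_pos k f h]
    rfl
  · have h2 : ¬ (T ∈ (X.restrict {v | v ≠ d}).faces ∧ (T.card : ℤ) = m + 1) :=
      fun hh => h ⟨hh.1.1, hh.2⟩
    rw [SComplex.evalC, SComplex.evalC, dif_neg h, dif_neg h2]

lemma evalC_extC (X : SComplex V) (d : V) (m : ℤ)
    (f : SComplex.cochain k (X.restrict {v | v ≠ d}) m) (T : Finset V) (hT : d ∉ T) :
    SComplex.evalC k (extC k X d m f) T = SComplex.evalC k f T := by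
  by_cases h : T ∈ (X.restrict {v | v ≠ d}).faces ∧ (T.card : ℤ) = m + 1
  · rw [evalC_pos k f h, evalC_pos k _ (⟨h.1.1, h.2⟩ : T ∈ X.faces ∧ (T.card : ℤ) = m + 1)]
    show dite _ _ _ = _
    rw [dif_pos h.1]
  · have h2 : ¬ (T ∈ X.faces ∧ (T.card : ℤ) = m + 1) := by
      intro hh
      exact h ⟨⟨hh.1, fun v hv hvd => hT (hvd ▸ hv)⟩, hh.2⟩
    rw [SComplex.evalC, dif_neg h2, SComplex.evalC, dif_neg h]

lemma res_coboundary (X : SComplex V) (d : V) (m : ℤ) (f : SComplex.cochain k X m) :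
    SComplex.coboundary k (X.restrict {v | v ≠ d}) m (resC k X d m f)
      = resC k X d (m+1) (SComplex.coboundary k X m f) := by
  funext G
  obtain ⟨T, hT⟩ := G
  have hdT : d ∉ T := fun hd => hT.1.2 d hd rfl
  rw [coboundary_apply]
  show _ = SComplex.coboundary k X m f ⟨T, hT.1.1, hT.2⟩
  rw [coboundary_apply]
  refine Finset.sum_congr rfl fun v hv => ?_
  rw [evalC_resC k X d m f (T.erase v) (fun hd => hdT (Finset.mem_of_mem_erase hd))]

lemma exactE (n : ℕ) : ∀ (X : SComplex V) (D : Finset V) (z : V) (π : V → V),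
    D.card = n → z ∉ D → (∀ d ∈ D, π d ∉ D ∧ π d ≠ d) →
    (∀ F ∈ X.faces, ∀ d ∈ D, d ∈ F → insert (π d) F ∈ X.faces) →
    (∀ F ∈ X.faces, (∀ d ∈ D, d ∉ F) → insert z F ∈ X.faces) →
    ∀ (j : ℤ) (f : SComplex.cochain k X (j+1)), SComplex.coboundary k X (j+1) f = 0 →
    ∃ c, SComplex.coboundary k X j c = f := by
  induction n with
  | zero =>
      intro X D z π hcard hzD hπ hfold hcone j f hf
      have hD : D = ∅ := Finset.card_eq_zero.1 hcard
      subst hD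
      refine ⟨sC k X z j f, ?_⟩
      have hme := master_E k X z (fun _ => True) (fun _ _ => trivial) (fun _ _ _ => trivial)
        (fun F hF _ _ => hcone F hF (fun e he => absurd he (Finset.notMem_empty e)))
        j f (fun G hG => absurd trivial hG)
      rw [hf, map_zero, add_zero] at hme
      exact hme
  | succ n ih =>
      intro X D z π hcard hzD hπ hfold hcone j f hf
      obtain ⟨d, hd⟩ : D.Nonempty := Finset.card_pos.1 (by omega)
      have hπd := hπ d hd
      have hdz : z ≠ d := fun h => hzD (h ▸ hd)
      have h1 : SComplex.coboundary k (X.restrict {v | v ≠ d}) (j+1) (resC k X d (j+1) f) = 0 := by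
        rw [res_coboundary, hf]
        funext G
        rfl
      obtain ⟨cbar, hcbar⟩ := ih (X.restrict {v | v ≠ d}) (D.erase d) z π
        (by rw [Finset.card_erase_of_mem hd, hcard]; rfl)
        (fun h => hzD (Finset.mem_of_mem_erase h))
        (fun e he => ⟨fun hc => (hπ e (Finset.mem_of_mem_erase he)).1 (Finset.mem_of_mem_erase hc),
          (hπ e (Finset.mem_of_mem_erase he)).2⟩)
        (by
          intro F hF e he heF
          have heD : e ∈ D := Finset.mem_of_mem_erase he
          refine ⟨hfold F hF.1 e heD heF, ?_⟩
          intro v hv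
          rcases Finset.mem_insert.1 hv with rfl | hv2
          · exact fun hvd => (hπ e heD).1 (hvd ▸ hd)
          · exact hF.2 v hv2)
        (by
          intro F hF hDF
          have hdF : d ∉ F := fun hc => hF.2 d hc rfl
          have hall : ∀ e ∈ D, e ∉ F := by
            intro e he
            by_cases hed : e = d
            · exact hed ▸ hdF
            · exact hDF e (Finset.mem_erase.2 ⟨hed, he⟩)
          refine ⟨hcone F hF.1 hall, ?_⟩
          intro v hv
          rcases Finset.mem_insert.1 hv with rfl | hv2
          · exact fun hc => hzD (hc ▸ hd)
          · exact hF.2 v hv2)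
        j (resC k X d (j+1) f) h1
      set c := extC k X d j cbar with hc
      set a := f - SComplex.coboundary k X j c with ha
      have hasupp : ∀ G : SComplex.Face X (j+1), ¬ (d ∈ G.1) → a G = 0 := by
        intro G hdG
        obtain ⟨T, hTf, hTc⟩ := G
        have hT' : T ∈ (X.restrict {v | v ≠ d}).faces :=
          ⟨hTf, fun v hv hvd => hdG (hvd ▸ hv)⟩
        have step1 : SComplex.coboundary k X j c ⟨T, hTf, hTc⟩
            = SComplex.coboundary k (X.restrict {v | v ≠ d}) j cbar ⟨T, hT', hTc⟩ := by
          rw [coboundary_apply, coboundary_apply]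
          refine Finset.sum_congr rfl fun v hv => ?_
          rw [hc, evalC_extC k X d j cbar (T.erase v)
            (fun hm => hdG (Finset.mem_of_mem_erase hm))]
        have step2 : SComplex.coboundary k (X.restrict {v | v ≠ d}) j cbar ⟨T, hT', hTc⟩
            = f ⟨T, hTf, hTc⟩ := by
          rw [hcbar]
          rfl
        show f ⟨T, hTf, hTc⟩ - SComplex.coboundary k X j c ⟨T, hTf, hTc⟩ = 0
        rw [step1, step2, sub_self]
      have hda : SComplex.coboundary k X (j+1) a = 0 := by
        rw [ha, map_sub, hf]
        funext F
        show (0:k) - SComplex.coboundary k X (j+1) (SComplex.coboundary k X j c) F = 0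
        rw [cob_cob, sub_zero]
      have hme := master_E k X (π d) (fun T => d ∈ T)
        (fun T hm => (Finset.mem_insert.1 hm).resolve_left
          (fun hc => hπd.2 hc.symm))
        (fun T v hm => Finset.mem_of_mem_erase hm)
        (fun F hF hdF _ => hfold F hF d hd hdF)
        j a hasupp
      rw [hda, map_zero, add_zero] at hme
      refine ⟨c + sC k X (π d) j a, ?_⟩
      rw [map_add, hme, ha]
      abel

end ExactE

section MasterK
variable {V : Type u} (k : Type w) [Field k]

lemma evalK_pos {I : SqfIdeal V} {R : Finset V} {i : ℤ} (f : SqfIdeal.kchain k I R i)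
    {S : Finset V} (h : S ⊆ R ∧ (S.card : ℤ) = i ∧ R \ S ∈ I.carrier) :
    SqfIdeal.evalK k f S = f ⟨S, h⟩ := dif_pos h

lemma evalK_zero_card {I : SqfIdeal V} {R : Finset V} {i : ℤ} (f : SqfIdeal.kchain k I R i)
    {S : Finset V} (h : (S.card : ℤ) ≠ i) : SqfIdeal.evalK k f S = 0 :=
  dif_neg (fun hh => h hh.2.1)

/-- The explicit contracting homotopy for the Koszul strand, with apex `z`. -/
def σK (I : SqfIdeal V) (R : Finset V) (z : V) (m : ℤ) :
    SqfIdeal.kchain k I R (m-1) →ₗ[k] SqfIdeal.kchain k I R m where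
  toFun f S := (-1:k) ^ (vpos S.1 z) * SqfIdeal.evalK k f (S.1.erase z)
  map_add' f g := by
    funext S
    show (-1:k) ^ (vpos S.1 z) * SqfIdeal.evalK k (f + g) (S.1.erase z) = _
    rw [SqfIdeal.evalK_add]
    show _ = (-1:k) ^ (vpos S.1 z) * SqfIdeal.evalK k f (S.1.erase z)
      + (-1:k) ^ (vpos S.1 z) * SqfIdeal.evalK k g (S.1.erase z)
    ring
  map_smul' c f := by
    funext S
    show (-1:k) ^ (vpos S.1 z) * SqfIdeal.evalK k (c • f) (S.1.erase z) = _
    rw [SqfIdeal.evalK_smul]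
    show _ = c * ((-1:k) ^ (vpos S.1 z) * SqfIdeal.evalK k f (S.1.erase z))
    ring

lemma koszulD_apply (I : SqfIdeal V) (R : Finset V) (i : ℤ) (f : SqfIdeal.kchain k I R i)
    (S : SqfIdeal.KBasis I R (i-1)) :
    SqfIdeal.koszulD k I R i f S
      = ∑ v ∈ R \ S.1, ((-1:k) ^ vpos S.1 v) * SqfIdeal.evalK k f (insert v S.1) := rfl

lemma σK_apply (I : SqfIdeal V) (R : Finset V) (z : V) (m : ℤ) (f : SqfIdeal.kchain k I R (m-1))
    (S : SqfIdeal.KBasis I R m) :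
    σK k I R z m f S = (-1:k) ^ (vpos S.1 z) * SqfIdeal.evalK k f (S.1.erase z) := rfl

lemma master_K (I : SqfIdeal V) (R : Finset V) (z : V) (hzR : z ∈ R) (mark : Finset V → Prop)
    (hm1 : ∀ S : Finset V, mark (S.erase z) → mark S)
    (hm2 : ∀ (S : Finset V) (v : V), mark (insert v S) → mark S)
    (hcone : ∀ S : Finset V, S ⊆ R → R \ S ∈ I.carrier → mark S → z ∉ S →
        R \ (insert z S) ∈ I.carrier)
    (hins : ∀ (S : Finset V) (v : V), S ⊆ R → R \ S ∈ I.carrier → mark S → z ∈ S →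
        v ∈ R \ S → v ≠ z → mark (insert v (S.erase z)) →
        R \ (insert v (S.erase z)) ∈ I.carrier → R \ (insert v S) ∈ I.carrier)
    (g : ℤ) (f : SqfIdeal.kchain k I R (g-1))
    (hf : ∀ S : SqfIdeal.KBasis I R (g-1), ¬ mark S.1 → f S = 0) :
    SqfIdeal.koszulD k I R g (σK k I R z g f)
      + σK k I R z (g-1) (SqfIdeal.koszulD k I R (g-1) f) = f := by
  have hfe : ∀ T : Finset V, ¬ mark T → SqfIdeal.evalK k f T = 0 := by
    intro T hT
    unfold SqfIdeal.evalK
    split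
    · exact hf _ hT
    · rfl
  funext S
  obtain ⟨S, hSR, hScard, hSI⟩ := S
  rw [Pi.add_apply, koszulD_apply, σK_apply]
  by_cases hmS : mark S
  · by_cases hzS : z ∈ S
    · -- z in S : cancellation case
      have hSz_sub : S.erase z ⊆ R := (Finset.erase_subset z S).trans hSR
      have hSz_card : (((S.erase z).card : ℤ)) = g - 1 - 1 := by
        rw [Finset.card_erase_of_mem hzS, Nat.cast_sub (Finset.card_pos.2 ⟨z, hzS⟩), hScard]
        ring
      have hSz_I : R \ (S.erase z) ∈ I.carrier :=
        I.up_closed hSI (Finset.sdiff_subset_sdiff (le_refl R) (Finset.erase_subset z S))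
      have hrw : R \ (S.erase z) = insert z (R \ S) := Finset.sdiff_erase hzR
      have hznotRS : z ∉ R \ S := fun hc => (Finset.mem_sdiff.1 hc).2 hzS
      -- expand term2
      have e2 : SqfIdeal.evalK k (SqfIdeal.koszulD k I R (g-1) f) (S.erase z)
          = ∑ w ∈ R \ (S.erase z), ((-1:k) ^ vpos (S.erase z) w)
              * SqfIdeal.evalK k f (insert w (S.erase z)) := by
        rw [evalK_pos k _ ⟨hSz_sub, hSz_card, hSz_I⟩, koszulD_apply]
      rw [e2, hrw, Finset.sum_insert hznotRS, mul_add, Finset.mul_sum]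
      rw [Finset.insert_erase hzS, vpos_erase_self, evalK_pos k f ⟨hSR, hScard, hSI⟩]
      -- termwise identity for term1
      have e1 : ∀ v ∈ R \ S, SqfIdeal.evalK k (σK k I R z g f) (insert v S)
          = (-1:k) ^ (vpos (insert v S) z) * SqfIdeal.evalK k f (insert v (S.erase z)) := by
        intro v hv
        obtain ⟨hvR, hvS⟩ := Finset.mem_sdiff.1 hv
        have hvz : v ≠ z := fun h => hvS (h ▸ hzS)
        have herw : (insert v S).erase z = insert v (S.erase z) :=
          Finset.erase_insert_of_ne hvz
        have hc1sub : insert v S ⊆ R := Finset.insert_subset hvR hSR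
        have hc1card : (((insert v S).card : ℤ)) = g := by
          rw [Finset.card_insert_of_notMem hvS]
          push_cast
          omega
        have hc2sub : insert v (S.erase z) ⊆ R := Finset.insert_subset hvR hSz_sub
        have hc2card : (((insert v (S.erase z)).card : ℤ)) = g - 1 - 1 + 1 := by
          rw [Finset.card_insert_of_notMem (fun hc => hvS (Finset.mem_of_mem_erase hc)),
            Finset.card_erase_of_mem hzS]
          omega
      -- the card of insert v (S.erase z) equals (g-1)-1+1 = g-1 as required for f's gate
        by_cases hc2I : R \ (insert v (S.erase z)) ∈ I.carrier
        · by_cases hfz : SqfIdeal.evalK k f (insert v (S.erase z)) = 0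
          · rw [hfz, mul_zero]
            unfold SqfIdeal.evalK
            split
            · show (-1:k) ^ (vpos (insert v S) z) * SqfIdeal.evalK k f ((insert v S).erase z) = 0
              rw [herw, hfz, mul_zero]
            · rfl
          · -- the value of f there is nonzero, hence marked, hence the outer gate holds
            have hmkm : mark (insert v (S.erase z)) := by
              by_contra hmm
              exact hfz (hfe _ hmm)
            have hc1I : R \ (insert v S) ∈ I.carrier :=
              hins S v hSR hSI hmS hzS hv hvz hmkm hc2I
            rw [evalK_pos k _ ⟨hc1sub, hc1card, hc1I⟩, σK_apply, herw]
        · have hfz : SqfIdeal.evalK k f (insert v (S.erase z)) = 0 := by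
            unfold SqfIdeal.evalK
            rw [dif_neg (fun hh => hc2I hh.2.2)]
          rw [hfz, mul_zero]
          unfold SqfIdeal.evalK
          split
          · show (-1:k) ^ (vpos (insert v S) z) * SqfIdeal.evalK k f ((insert v S).erase z) = 0
            rw [herw, hfz, mul_zero]
          · rfl
      rw [Finset.sum_congr rfl (fun v hv => by rw [e1 v hv])]
      have hcancel : (∑ v ∈ R \ S, ((-1:k) ^ vpos S v)
            * ((-1:k) ^ (vpos (insert v S) z) * SqfIdeal.evalK k f (insert v (S.erase z))))
          + (∑ v ∈ R \ S, (-1:k) ^ (vpos S z)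
            * (((-1:k) ^ vpos (S.erase z) v) * SqfIdeal.evalK k f (insert v (S.erase z)))) = 0 := by
        rw [← Finset.sum_add_distrib]
        refine Finset.sum_eq_zero fun v hv => ?_
        obtain ⟨hvR, hvS⟩ := Finset.mem_sdiff.1 hv
        rw [← mul_assoc, ← mul_assoc, ← pow_add, ← pow_add, sign_flip hzS hvS]
        ring
      have hcc : (-1:k) ^ (vpos S z) * (-1:k) ^ (vpos S z) = 1 := by
        rw [← pow_add]
        exact (Even.neg_one_pow ⟨vpos S z, rfl⟩)
      linear_combination hcancel + f ⟨S, hSR, hScard, hSI⟩ * hcc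
    · -- z not in S : the single surviving term
      have ht2 : SqfIdeal.evalK k (SqfIdeal.koszulD k I R (g-1) f) (S.erase z) = 0 := by
        rw [Finset.erase_eq_of_notMem hzS]
        exact evalK_zero_card k _ (by rw [hScard]; intro hc; omega)
      rw [ht2, mul_zero, add_zero]
      have hzRS : z ∈ R \ S := Finset.mem_sdiff.2 ⟨hzR, hzS⟩
      rw [Finset.sum_eq_single_of_mem z hzRS ?side]
      case side =>
        intro v hv hvz
        obtain ⟨hvR, hvS⟩ := Finset.mem_sdiff.1 hv
        have h0 : SqfIdeal.evalK k (σK k I R z g f) (insert v S) = 0 := by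
          unfold SqfIdeal.evalK
          split
          · show (-1:k) ^ (vpos (insert v S) z) * SqfIdeal.evalK k f ((insert v S).erase z) = 0
            have hznm : z ∉ insert v S := by
              intro hc
              rcases Finset.mem_insert.1 hc with h | h
              · exact hvz h.symm
              · exact hzS h
            rw [Finset.erase_eq_of_notMem hznm]
            have : SqfIdeal.evalK k f (insert v S) = 0 := by
              apply evalK_zero_card
              rw [Finset.card_insert_of_notMem hvS]
              push_cast
              omega
            rw [this, mul_zero]
          · rfl
        rw [h0, mul_zero]
      -- main term at v = z
      have hgate : insert z S ⊆ R ∧ (((insert z S).card : ℤ)) = g ∧ R \ (insert z S) ∈ I.carrier := by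
        refine ⟨Finset.insert_subset hzR hSR, ?_, hcone S hSR hSI hmS hzS⟩
        rw [Finset.card_insert_of_notMem hzS]
        push_cast
        omega
      rw [evalK_pos k _ hgate, σK_apply, Finset.erase_insert hzS, vpos_insert_self,
        evalK_pos k f ⟨hSR, hScard, hSI⟩, ← mul_assoc, ← pow_add]
      have : Even (vpos S z + vpos S z) := ⟨vpos S z, rfl⟩
      rw [this.neg_one_pow, one_mul]
  · -- unmarked
    rw [hf ⟨S, hSR, hScard, hSI⟩ hmS]
    have t1 : ∀ v ∈ R \ S, ((-1:k) ^ vpos S v)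
        * SqfIdeal.evalK k (σK k I R z g f) (insert v S) = 0 := by
      intro v hv
      have h0 : SqfIdeal.evalK k (σK k I R z g f) (insert v S) = 0 := by
        unfold SqfIdeal.evalK
        split
        · show (-1:k) ^ (vpos (insert v S) z) * SqfIdeal.evalK k f ((insert v S).erase z) = 0
          rw [hfe _ (fun hm => hmS (hm2 S v (hm1 (insert v S) hm))), mul_zero]
        · rfl
      rw [h0, mul_zero]
    have t2 : SqfIdeal.evalK k (SqfIdeal.koszulD k I R (g-1) f) (S.erase z) = 0 := by
      unfold SqfIdeal.evalK
      split
      case isTrue h =>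
        rw [koszulD_apply]
        refine Finset.sum_eq_zero fun w hw => ?_
        rw [hfe _ (fun hm => hmS (hm1 S (hm2 (S.erase z) w hm))), mul_zero]
      case isFalse => rfl
    rw [Finset.sum_eq_zero t1, t2, mul_zero, add_zero]

lemma kos_kos (I : SqfIdeal V) (R : Finset V) (m : ℤ) (c : SqfIdeal.kchain k I R m)
    (S : SqfIdeal.KBasis I R (m-1-1)) :
    SqfIdeal.koszulD k I R (m-1) (SqfIdeal.koszulD k I R m c) S = 0 := by
  obtain ⟨S, hSR, hScard, hSI⟩ := S
  rw [koszulD_apply]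
  have expand : ∀ v ∈ R \ S, SqfIdeal.evalK k (SqfIdeal.koszulD k I R m c) (insert v S)
      = ∑ w ∈ (R \ S).erase v, ((-1:k) ^ vpos (insert v S) w)
          * SqfIdeal.evalK k c (insert w (insert v S)) := by
    intro v hv
    obtain ⟨hvR, hvS⟩ := Finset.mem_sdiff.1 hv
    have hrange : R \ (insert v S) = (R \ S).erase v := by
      ext x
      simp only [Finset.mem_sdiff, Finset.mem_erase, Finset.mem_insert]
      tauto
    by_cases hc1 : R \ (insert v S) ∈ I.carrier
    · have hgate : insert v S ⊆ R ∧ (((insert v S).card : ℤ)) = m - 1 ∧ R \ (insert v S) ∈ I.carrier := by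
        refine ⟨Finset.insert_subset hvR hSR, ?_, hc1⟩
        rw [Finset.card_insert_of_notMem hvS]
        push_cast
        omega
      rw [evalK_pos k _ hgate, koszulD_apply, hrange]
    · have hz : SqfIdeal.evalK k (SqfIdeal.koszulD k I R m c) (insert v S) = 0 := by
        unfold SqfIdeal.evalK
        rw [dif_neg (fun hh => hc1 hh.2.2)]
      rw [hz]
      symm
      refine Finset.sum_eq_zero fun w hw => ?_
      have hwvS : w ∉ insert v S := by
        intro hc
        rcases Finset.mem_insert.1 hc with h | h
        · exact (Finset.mem_erase.1 hw).1 h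
        · exact (Finset.mem_sdiff.1 (Finset.mem_of_mem_erase hw)).2 h
      have : SqfIdeal.evalK k c (insert w (insert v S)) = 0 := by
        unfold SqfIdeal.evalK
        rw [dif_neg]
        intro hh
        apply hc1
        exact I.up_closed hh.2.2 (Finset.sdiff_subset_sdiff (le_refl R) (Finset.subset_insert w _))
      rw [this, mul_zero]
  calc ∑ v ∈ R \ S, ((-1:k) ^ vpos S v)
        * SqfIdeal.evalK k (SqfIdeal.koszulD k I R m c) (insert v S)
      = ∑ v ∈ R \ S, ∑ w ∈ (R \ S).erase v,
          ((-1:k) ^ vpos S v) * (((-1:k) ^ vpos (insert v S) w)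
            * SqfIdeal.evalK k c (insert w (insert v S))) := by
        refine Finset.sum_congr rfl fun v hv => ?_
        rw [expand v hv, Finset.mul_sum]
    _ = 0 := by
        apply sum_pair_cancel
        intro v hv w hw hvw
        obtain ⟨hvR, hvS⟩ := Finset.mem_sdiff.1 hv
        obtain ⟨hwR, hwS⟩ := Finset.mem_sdiff.1 hw
        rw [Finset.insert_comm, ← mul_assoc, ← mul_assoc, ← pow_add, ← pow_add,
          sign_flip₃ hvS hwS hvw]
        ring

end MasterK

section ExactK
variable {V : Type u} (k : Type w) [Field k]

lemma sdiffs₁ {R S : Finset V} {d : V} (hdR : d ∈ R) (hdS : d ∈ S) :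
    R.erase d \ S.erase d = R \ S := by
  ext x
  by_cases hxd : x = d
  · subst hxd
    simp [hdS]
  · simp [Finset.mem_sdiff, Finset.mem_erase, hxd]

lemma sdiffs₂ {R S : Finset V} {d : V} (hdR : d ∈ R) (hdS : d ∈ S) (v : V) :
    R.erase d \ insert v (S.erase d) = R \ insert v S := by
  rw [Finset.sdiff_insert, Finset.sdiff_insert, sdiffs₁ hdR hdS]

lemma sdiffs₄ (R S : Finset V) (d : V) : R.erase d \ S = R \ insert d S := by
  rw [Finset.erase_sdiff_comm, Finset.sdiff_insert]

lemma exactK (I : SqfIdeal V) (z : V) (π : V → V) (n : ℕ) :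
    ∀ (R D : Finset V), D.card = n → D ⊆ R → z ∈ R → z ∉ D →
    (∀ d ∈ D, π d ∈ R ∧ π d ∉ D ∧ π d ≠ d) →
    (∀ T : Finset V, T ⊆ R → ∀ d ∈ D, d ∈ T → T ∉ I.carrier → insert (π d) T ∉ I.carrier) →
    (∀ T : Finset V, T ⊆ R → (∀ d ∈ D, d ∉ T) → T ∉ I.carrier → insert z T ∉ I.carrier) →
    ∀ (g : ℤ) (f : SqfIdeal.kchain k I R (g-1)),
      SqfIdeal.koszulD k I R (g-1) f = 0 → ∃ c, SqfIdeal.koszulD k I R g c = f := by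
  induction n with
  | zero =>
      intro R D hcard hDR hzR hzD hπ hfold hcone g f hf0
      have hD : D = ∅ := Finset.card_eq_zero.1 hcard
      subst hD
      refine ⟨σK k I R z g f, ?_⟩
      have hconeK : ∀ S : Finset V, S ⊆ R → R \ S ∈ I.carrier → (fun _ => True) S → z ∉ S →
          R \ (insert z S) ∈ I.carrier := by
        intro S hSR hSI _ hzS
        rw [Finset.sdiff_insert]
        by_contra hnc
        have := hcone ((R \ S).erase z)
          ((Finset.erase_subset z (R \ S)).trans Finset.sdiff_subset)
          (fun e he => absurd he (Finset.notMem_empty e)) hnc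
        rw [Finset.insert_erase (Finset.mem_sdiff.2 ⟨hzR, hzS⟩)] at this
        exact this hSI
      have hinsK : ∀ (S : Finset V) (v : V), S ⊆ R → R \ S ∈ I.carrier → (fun _ => True) S →
          z ∈ S → v ∈ R \ S → v ≠ z → (fun _ => True) (insert v (S.erase z)) →
          R \ (insert v (S.erase z)) ∈ I.carrier → R \ (insert v S) ∈ I.carrier := by
        intro S v hSR hSI _ hzS hv hvz _ hc2
        have hkey : R \ (insert v (S.erase z)) = insert z (R \ insert v S) := by
          rw [Finset.sdiff_insert, Finset.sdiff_erase (hSR hzS),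
            Finset.erase_insert_of_ne (Ne.symm hvz), Finset.sdiff_insert]
        rw [hkey] at hc2
        by_contra hnc
        have hznm : z ∉ R \ insert v S :=
          fun hc => ((Finset.mem_sdiff.1 hc).2 (Finset.mem_insert_of_mem hzS))
        have := hcone (R \ insert v S) Finset.sdiff_subset
          (fun e he => absurd he (Finset.notMem_empty e)) hnc
        exact this hc2
      have hme := master_K k I R z hzR (fun _ => True) (fun _ _ => trivial) (fun _ _ _ => trivial)
        hconeK hinsK g f (fun S hS => absurd trivial hS)
      rw [hf0, map_zero, add_zero] at hme
      exact hme
  | succ n ih =>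
      intro R D hcard hDR hzR hzD hπ hfold hcone g f hf0
      obtain ⟨d, hd⟩ : D.Nonempty := Finset.card_pos.1 (by omega)
      have hdR : d ∈ R := hDR hd
      have hπd := hπ d hd
      have hzd : z ≠ d := fun h => hzD (h ▸ hd)
      -- Claim 1 : the transported cochain is a cocycle over R.erase d
      have claim1 : SqfIdeal.koszulD k I (R.erase d) (g-1-1)
          (fun S' => (-1:k) ^ (vpos S'.1 d) * SqfIdeal.evalK k f (insert d S'.1)) = 0 := by
        funext S0
        obtain ⟨S'', hsub, hcardS, hIS⟩ := S0
        have hdS'' : d ∉ S'' := fun hc => (Finset.mem_erase.1 (hsub hc)).1 rfl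
        have hTsub : insert d S'' ⊆ R :=
          Finset.insert_subset hdR (hsub.trans (Finset.erase_subset d R))
        have hTcard : (((insert d S'').card : ℤ)) = (g-1) - 1 := by
          rw [Finset.card_insert_of_notMem hdS'']
          omega
        have hTI : R \ insert d S'' ∈ I.carrier := by
          rw [← sdiffs₄]
          exact hIS
        have hinner : ∑ v ∈ R \ insert d S'', ((-1:k) ^ vpos (insert d S'') v)
            * SqfIdeal.evalK k f (insert v (insert d S'')) = 0 :=
          congrFun hf0 ⟨insert d S'', hTsub, hTcard, hTI⟩
        show (∑ v ∈ R.erase d \ S'', ((-1:k) ^ vpos S'' v) * SqfIdeal.evalK k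
            (fun S' : SqfIdeal.KBasis I (R.erase d) (g-1-1) =>
              (-1:k) ^ (vpos S'.1 d) * SqfIdeal.evalK k f (insert d S'.1)) (insert v S'')) = 0
        have hterm2 : ∀ v ∈ R.erase d \ S'',
            SqfIdeal.evalK k (fun S' : SqfIdeal.KBasis I (R.erase d) (g-1-1) =>
              (-1:k) ^ (vpos S'.1 d) * SqfIdeal.evalK k f (insert d S'.1)) (insert v S'')
            = (-1:k) ^ (vpos (insert v S'') d)
                * SqfIdeal.evalK k f (insert d (insert v S'')) := by
          intro v hv
          obtain ⟨hvR', hvS''⟩ := Finset.mem_sdiff.1 hv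
          have hsub2 : insert v S'' ⊆ R.erase d := Finset.insert_subset hvR' hsub
          have hcard2 : (((insert v S'').card : ℤ)) = g - 1 - 1 := by
            rw [Finset.card_insert_of_notMem hvS'']
            omega
          by_cases hcI : R.erase d \ insert v S'' ∈ I.carrier
          · rw [evalK_pos k _ ⟨hsub2, hcard2, hcI⟩]
          · have h1 : SqfIdeal.evalK k f (insert d (insert v S'')) = 0 := by
              unfold SqfIdeal.evalK
              rw [dif_neg (fun hh => hcI (by rw [sdiffs₄]; exact hh.2.2))]
            have h0 : SqfIdeal.evalK k (fun S' : SqfIdeal.KBasis I (R.erase d) (g-1-1) =>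
                (-1:k) ^ (vpos S'.1 d) * SqfIdeal.evalK k f (insert d S'.1)) (insert v S'') = 0 := by
              unfold SqfIdeal.evalK
              rw [dif_neg (fun hh => hcI hh.2.2)]
            rw [h0, h1, mul_zero]
        calc (∑ v ∈ R.erase d \ S'', ((-1:k) ^ vpos S'' v) * SqfIdeal.evalK k
              (fun S' : SqfIdeal.KBasis I (R.erase d) (g-1-1) =>
                (-1:k) ^ (vpos S'.1 d) * SqfIdeal.evalK k f (insert d S'.1)) (insert v S''))
            = ∑ v ∈ R \ insert d S'', (-((-1:k) ^ (vpos S'' d)))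
                * (((-1:k) ^ vpos (insert d S'') v)
                  * SqfIdeal.evalK k f (insert v (insert d S''))) := by
              rw [← sdiffs₄ R S'' d]
              refine Finset.sum_congr rfl fun v hv => ?_
              obtain ⟨hvR', hvS''⟩ := Finset.mem_sdiff.1 hv
              have hvd : v ≠ d := (Finset.mem_erase.1 hvR').1
              rw [hterm2 v hv, Finset.insert_comm d v S'']
              have hs := sign_flip₃ (k := k) hvS'' hdS'' hvd
              rw [pow_add, pow_add] at hs
              linear_combination (SqfIdeal.evalK k f (insert v (insert d S''))) * hs
          _ = 0 := by
              rw [← Finset.mul_sum, hinner, mul_zero]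
      obtain ⟨cbar, hcbar⟩ := ih (R.erase d) (D.erase d)
        (by rw [Finset.card_erase_of_mem hd, hcard]; omega)
        (fun e he => Finset.mem_erase.2
          ⟨(Finset.mem_erase.1 he).1, hDR (Finset.mem_of_mem_erase he)⟩)
        (Finset.mem_erase.2 ⟨hzd, hzR⟩)
        (fun h => hzD (Finset.mem_of_mem_erase h))
        (fun e he =>
          ⟨Finset.mem_erase.2 ⟨fun hc => (hπ e (Finset.mem_of_mem_erase he)).2.1 (hc ▸ hd),
              (hπ e (Finset.mem_of_mem_erase he)).1⟩,
            fun hc => (hπ e (Finset.mem_of_mem_erase he)).2.1 (Finset.mem_of_mem_erase hc),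
            (hπ e (Finset.mem_of_mem_erase he)).2.2⟩)
        (fun T hT e he => hfold T (hT.trans (Finset.erase_subset d R)) e (Finset.mem_of_mem_erase he))
        (by
          intro T hT hDT
          refine hcone T (hT.trans (Finset.erase_subset d R)) ?_
          intro e he
          by_cases hed : e = d
          · subst hed
            exact fun hc => (Finset.mem_erase.1 (hT hc)).1 rfl
          · exact hDT e (Finset.mem_erase.2 ⟨hed, he⟩))
        (g-1)
        (fun S' => (-1:k) ^ (vpos S'.1 d) * SqfIdeal.evalK k f (insert d S'.1))
        claim1
      set c : SqfIdeal.kchain k I R g := (fun S => if hdS : d ∈ S.1 then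
          -((-1:k) ^ (vpos S.1 d) * SqfIdeal.evalK k cbar (S.1.erase d)) else 0) with hcdef
      have claim2 : ∀ S : SqfIdeal.KBasis I R (g-1), d ∈ S.1 →
          SqfIdeal.koszulD k I R g c S = f S := by
        rintro ⟨S, hSR, hScard, hSI⟩ hdS
        have hdS : d ∈ S := hdS
        rw [koszulD_apply]
        have hSz_sub : S.erase d ⊆ R.erase d := fun x hx => Finset.mem_erase.2
          ⟨(Finset.mem_erase.1 hx).1, hSR (Finset.mem_of_mem_erase hx)⟩
        have hSz_card : (((S.erase d).card : ℤ)) = (g-1) - 1 := by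
          have hpos : 0 < S.card := Finset.card_pos.2 ⟨d, hdS⟩
          rw [Finset.card_erase_of_mem hdS]
          omega
        have hSz_I : R.erase d \ (S.erase d) ∈ I.carrier := by
          rw [sdiffs₁ hdR hdS]
          exact hSI
        have hfb : ∑ v ∈ R.erase d \ (S.erase d), ((-1:k) ^ vpos (S.erase d) v)
            * SqfIdeal.evalK k cbar (insert v (S.erase d))
            = (-1:k) ^ (vpos (S.erase d) d) * SqfIdeal.evalK k f (insert d (S.erase d)) :=
          congrFun hcbar ⟨S.erase d, hSz_sub, hSz_card, hSz_I⟩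
        rw [sdiffs₁ hdR hdS] at hfb
        rw [Finset.insert_erase hdS] at hfb
        rw [vpos_erase_self] at hfb
        rw [evalK_pos k f ⟨hSR, hScard, hSI⟩] at hfb
        have hterm2 : ∀ v ∈ R \ S, SqfIdeal.evalK k c (insert v S)
            = -(((-1:k) ^ (vpos (insert v S) d)) * SqfIdeal.evalK k cbar (insert v (S.erase d))) := by
          intro v hv
          obtain ⟨hvR, hvS⟩ := Finset.mem_sdiff.1 hv
          have hvd : v ≠ d := fun hc => hvS (hc ▸ hdS)
          have herw : (insert v S).erase d = insert v (S.erase d) :=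
            Finset.erase_insert_of_ne hvd
          have hgeq : R.erase d \ (insert v (S.erase d)) = R \ insert v S := sdiffs₂ hdR hdS v
          by_cases hcI : R \ insert v S ∈ I.carrier
          · have hg1 : insert v S ⊆ R ∧ (((insert v S).card:ℤ)) = g ∧ R \ insert v S ∈ I.carrier := by
              refine ⟨Finset.insert_subset hvR hSR, ?_, hcI⟩
              rw [Finset.card_insert_of_notMem hvS]
              omega
            rw [evalK_pos k c hg1, hcdef]
            show (if _ : d ∈ insert v S then
                -((-1:k) ^ (vpos (insert v S) d)
                  * SqfIdeal.evalK k cbar ((insert v S).erase d)) else 0) = _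
            rw [dif_pos (Finset.mem_insert_of_mem hdS), herw]
          · have h1 : SqfIdeal.evalK k c (insert v S) = 0 := by
              unfold SqfIdeal.evalK
              rw [dif_neg (fun hh => hcI hh.2.2)]
            have h2 : SqfIdeal.evalK k cbar (insert v (S.erase d)) = 0 := by
              unfold SqfIdeal.evalK
              rw [dif_neg (fun hh => hcI (by rw [← hgeq]; exact hh.2.2))]
            rw [h1, h2, mul_zero, neg_zero]
        calc ∑ v ∈ R \ S, ((-1:k) ^ vpos S v) * SqfIdeal.evalK k c (insert v S)
            = ∑ v ∈ R \ S, ((-1:k) ^ (vpos S d)) * (((-1:k) ^ vpos (S.erase d) v)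
                * SqfIdeal.evalK k cbar (insert v (S.erase d))) := by
              refine Finset.sum_congr rfl fun v hv => ?_
              obtain ⟨hvR, hvS⟩ := Finset.mem_sdiff.1 hv
              rw [hterm2 v hv]
              have hs := sign_flip (k := k) hdS hvS
              rw [pow_add, pow_add] at hs
              linear_combination (-(SqfIdeal.evalK k cbar (insert v (S.erase d)))) * hs
          _ = ((-1:k) ^ (vpos S d)) * ∑ v ∈ R \ S, (((-1:k) ^ vpos (S.erase d) v)
                * SqfIdeal.evalK k cbar (insert v (S.erase d))) := by
              rw [Finset.mul_sum]
          _ = ((-1:k) ^ (vpos S d)) * (((-1:k) ^ (vpos S d))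
                * f ⟨S, hSR, hScard, hSI⟩) := by
              rw [hfb]
          _ = f ⟨S, hSR, hScard, hSI⟩ := by
              rw [← mul_assoc, ← pow_add, Even.neg_one_pow ⟨vpos S d, rfl⟩, one_mul]
      set a := f - SqfIdeal.koszulD k I R g c with ha
      have hasupp : ∀ S : SqfIdeal.KBasis I R (g-1), ¬ (d ∉ S.1) → a S = 0 := by
        intro S hS
        have hdS : d ∈ S.1 := not_not.1 hS
        show f S - SqfIdeal.koszulD k I R g c S = 0
        rw [claim2 S hdS, sub_self]
      have hda : SqfIdeal.koszulD k I R (g-1) a = 0 := by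
        rw [ha, map_sub, hf0]
        funext S
        show (0:k) - SqfIdeal.koszulD k I R (g-1) (SqfIdeal.koszulD k I R g c) S = 0
        rw [kos_kos, sub_zero]
      have hme := master_K k I R (π d) hπd.1 (fun S => d ∉ S)
        (fun S h hdS2 => h (Finset.mem_erase.2 ⟨Ne.symm hπd.2.2, hdS2⟩))
        (fun S v h hdS2 => h (Finset.mem_insert_of_mem hdS2))
        (by
          intro S hSR hSI hdS2 hπS
          have hdRS : d ∈ R \ S := Finset.mem_sdiff.2 ⟨hdR, hdS2⟩
          rw [Finset.sdiff_insert]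
          by_cases hπT : π d ∈ R \ S
          · by_contra hnc
            have := hfold ((R \ S).erase (π d))
              ((Finset.erase_subset _ _).trans Finset.sdiff_subset)
              d hd (Finset.mem_erase.2 ⟨Ne.symm hπd.2.2, hdRS⟩) hnc
            rw [Finset.insert_erase hπT] at this
            exact this hSI
          · rw [Finset.erase_eq_of_notMem hπT]
            exact hSI)
        (by
          intro S v hSR hSI hdS2 hπS hv hvπ hmk hc2
          have hvd : v ≠ d := by
            intro hc
            exact hmk (by rw [hc]; exact Finset.mem_insert_self d _)
          have hkey : R \ (insert v (S.erase (π d))) = insert (π d) ((R \ S).erase v) := by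
            rw [Finset.sdiff_insert, Finset.sdiff_erase (hSR hπS),
              Finset.erase_insert_of_ne (Ne.symm hvπ)]
          rw [hkey] at hc2
          rw [Finset.sdiff_insert]
          by_contra hnc
          have := hfold ((R \ S).erase v)
            ((Finset.erase_subset _ _).trans Finset.sdiff_subset) d hd
            (Finset.mem_erase.2 ⟨Ne.symm hvd, Finset.mem_sdiff.2 ⟨hdR, hdS2⟩⟩) hnc
          exact this hc2)
        g a hasupp
      rw [hda, map_zero, add_zero] at hme
      refine ⟨c + σK k I R (π d) g a, ?_⟩
      rw [map_add, hme, ha]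
      abel

end ExactK

section Topology
variable {V : Type u} [Fintype V]

/-- Pushforward of weights along a vertex map. -/
def pushWeight (g : V → V) (f : V → ℝ) : V → ℝ :=
  fun w => ∑ u ∈ Finset.univ.filter (fun u => g u = w), f u

lemma pushWeight_continuous (g : V → V) : Continuous (pushWeight g) := by
  refine continuous_pi fun w => ?_
  exact continuous_finset_sum _ fun u _ => continuous_apply u

lemma pushWeight_nonneg {g : V → V} {f : V → ℝ} (hf : ∀ v, 0 ≤ f v) (w : V) :
    0 ≤ pushWeight g f w :=
  Finset.sum_nonneg fun u _ => hf u

lemma pushWeight_sum (g : V → V) (f : V → ℝ) : ∑ w, pushWeight g f w = ∑ v, f v :=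
  Finset.sum_fiberwise_of_maps_to (fun u _ => Finset.mem_univ (g u)) f

lemma pushWeight_support {g : V → V} {f : V → ℝ} {w : V} (h : pushWeight g f w ≠ 0) :
    ∃ u, g u = w ∧ f u ≠ 0 := by
  obtain ⟨u, hu, hne⟩ := Finset.exists_ne_zero_of_sum_ne_zero h
  exact ⟨u, (Finset.mem_filter.1 hu).2, hne⟩

lemma contractible_of_fold (X : SComplex V) (g : V → V) (z : V)
    (h0 : ∅ ∈ X.faces)
    (hg : ∀ F ∈ X.faces, F ∪ F.image g ∈ X.faces)
    (hz : ∀ F ∈ X.faces, insert z (F.image g) ∈ X.faces) :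
    ContractibleSpace (SComplex.realization X) := by
  rw [contractible_iff_id_nullhomotopic]
  have hzface : ({z} : Finset V) ∈ X.faces := by
    have h := hz ∅ h0
    simpa using h
  have hp0mem : (fun v => if v = z then (1:ℝ) else 0) ∈ SComplex.realization X := by
    refine ⟨fun v => by by_cases h : v = z <;> simp [h], by simp, ⟨{z}, hzface, fun v hv => ?_⟩⟩
    by_contra hvz
    exact hv (if_neg (by simpa using hvz))
  set p0 : SComplex.realization X := ⟨fun v => if v = z then (1:ℝ) else 0, hp0mem⟩ with hp0
  -- the fold map
  have hr : ∀ f : SComplex.realization X, pushWeight g (f : V → ℝ) ∈ SComplex.realization X := by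
    rintro ⟨f, hf1, hf2, F, hF, hsupp⟩
    refine ⟨pushWeight_nonneg hf1, by rw [pushWeight_sum, hf2], ⟨F.image g,
      X.down_closed (hg F hF) Finset.subset_union_right, fun w hw => ?_⟩⟩
    obtain ⟨u, hgu, hu⟩ := pushWeight_support hw
    exact Finset.mem_image.2 ⟨u, hsupp u hu, hgu⟩
  set rmap : C(SComplex.realization X, SComplex.realization X) :=
    ⟨fun f => ⟨pushWeight g (f : V → ℝ), hr f⟩,
      Continuous.subtype_mk ((pushWeight_continuous g).comp continuous_subtype_val) _⟩ with hrmap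
  -- continuity helpers
  have c1 : Continuous fun q : unitInterval × SComplex.realization X => (q.1 : ℝ) :=
    continuous_subtype_val.comp continuous_fst
  have c2 : ∀ v : V, Continuous fun q : unitInterval × SComplex.realization X => (q.2 : V → ℝ) v :=
    fun v => (continuous_apply v).comp (continuous_subtype_val.comp continuous_snd)
  have c3 : ∀ v : V, Continuous fun q : unitInterval × SComplex.realization X =>
      pushWeight g (q.2 : V → ℝ) v :=
    fun v => continuous_finset_sum _ fun u _ => c2 u
  -- first homotopy : from id to the fold
  have H1mem : ∀ (t : unitInterval) (f : SComplex.realization X),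
      (fun v => (1 - (t:ℝ)) * (f : V → ℝ) v + (t:ℝ) * pushWeight g (f : V → ℝ) v)
        ∈ SComplex.realization X := by
    rintro t ⟨f, hf1, hf2, F, hF, hsupp⟩
    refine ⟨fun v => add_nonneg (mul_nonneg (by simpa using t.2.2) (hf1 v))
      (mul_nonneg t.2.1 (pushWeight_nonneg hf1 v)), ?_, ⟨F ∪ F.image g, hg F hF, fun v hv => ?_⟩⟩
    · rw [Finset.sum_add_distrib, ← Finset.mul_sum, ← Finset.mul_sum, pushWeight_sum, hf2]
      ring
    · have hv' : (1 - (t:ℝ)) * f v + (t:ℝ) * pushWeight g f v ≠ 0 := hv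
      by_cases hfv : f v = 0
      · by_cases hpv : pushWeight g f v = 0
        · exact absurd (by rw [hfv, hpv]; ring) hv'
        · obtain ⟨u, hgu, hu⟩ := pushWeight_support hpv
          exact Finset.mem_union_right _ (Finset.mem_image.2 ⟨u, hsupp u hu, hgu⟩)
      · exact Finset.mem_union_left _ (hsupp v hfv)
  have H1 : (ContinuousMap.id (SComplex.realization X)).Homotopy rmap := by
    refine ⟨⟨fun q => ⟨fun v => (1 - (q.1:ℝ)) * (q.2 : V → ℝ) v
        + (q.1:ℝ) * pushWeight g (q.2 : V → ℝ) v, H1mem q.1 q.2⟩, ?_⟩, ?_, ?_⟩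
    · refine Continuous.subtype_mk (continuous_pi fun v => ?_) _
      exact ((continuous_const.sub c1).mul (c2 v)).add (c1.mul (c3 v))
    · intro f
      apply Subtype.ext
      funext v
      show (1 - ((0:unitInterval):ℝ)) * _ + ((0:unitInterval):ℝ) * _ = _
      norm_num
    · intro f
      apply Subtype.ext
      funext v
      show (1 - ((1:unitInterval):ℝ)) * _ + ((1:unitInterval):ℝ) * _ = _
      norm_num
      rfl
  -- second homotopy : from the fold to the constant map
  have H2mem : ∀ (t : unitInterval) (f : SComplex.realization X),
      (fun v => (1 - (t:ℝ)) * pushWeight g (f : V → ℝ) v + (t:ℝ) * (p0 : V → ℝ) v)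
        ∈ SComplex.realization X := by
    rintro t ⟨f, hf1, hf2, F, hF, hsupp⟩
    refine ⟨fun v => add_nonneg (mul_nonneg (by simpa using t.2.2) (pushWeight_nonneg hf1 v))
      (mul_nonneg t.2.1 (hp0mem.1 v)), ?_, ⟨insert z (F.image g), hz F hF, fun v hv => ?_⟩⟩
    · rw [Finset.sum_add_distrib, ← Finset.mul_sum, ← Finset.mul_sum, pushWeight_sum, hf2,
        hp0mem.2.1]
      ring
    · have hv' : (1 - (t:ℝ)) * pushWeight g f v + (t:ℝ) * (p0 : V → ℝ) v ≠ 0 := hv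
      by_cases hpv : pushWeight g f v = 0
      · by_cases hzv : (p0 : V → ℝ) v = 0
        · exact absurd (by rw [hpv, hzv]; ring) hv'
        · have hvz : v = z := by
            by_contra hne
            exact hzv (if_neg hne)
          rw [hvz]
          exact Finset.mem_insert_self z _
      · obtain ⟨u, hgu, hu⟩ := pushWeight_support hpv
        exact Finset.mem_insert_of_mem (Finset.mem_image.2 ⟨u, hsupp u hu, hgu⟩)
  have H2 : rmap.Homotopy (ContinuousMap.const _ p0) := by
    refine ⟨⟨fun q => ⟨fun v => (1 - (q.1:ℝ)) * pushWeight g (q.2 : V → ℝ) v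
        + (q.1:ℝ) * (p0 : V → ℝ) v, H2mem q.1 q.2⟩, ?_⟩, ?_, ?_⟩
    · refine Continuous.subtype_mk (continuous_pi fun v => ?_) _
      exact ((continuous_const.sub c1).mul (c3 v)).add (c1.mul continuous_const)
    · intro f
      apply Subtype.ext
      funext v
      show (1 - ((0:unitInterval):ℝ)) * _ + ((0:unitInterval):ℝ) * _ = _
      norm_num
      rfl
    · intro f
      apply Subtype.ext
      funext v
      show (1 - ((1:unitInterval):ℝ)) * _ + ((1:unitInterval):ℝ) * _ = _
      norm_num
  exact ⟨p0, ⟨H1.trans H2⟩⟩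

end Topology

attribute [-instance] instDecidableEqProd

section Final
variable {P : Type u} [PartialOrder P]

lemma mono_two {p q : P} (hpq : p ≤ q) :
    Monotone (fun i : Fin 2 => if i = 0 then p else q) := by
  intro i j hij
  fin_cases i <;> fin_cases j <;> simp_all [Fin.le_def]

lemma letterplace_mem {T : Finset (Fin 2 × P)} :
    T ∈ (letterplace 2 P).carrier
      ↔ ∃ p q : P, p ≤ q ∧ ((0:Fin 2), p) ∈ T ∧ ((1:Fin 2), q) ∈ T := by
  constructor
  · rintro ⟨c, hc, hm⟩
    exact ⟨c 0, c 1, hc (by decide : (0:Fin 2) ≤ 1), hm 0, hm 1⟩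
  · rintro ⟨p, q, hpq, hp, hq⟩
    refine ⟨fun i => if i = 0 then p else q, mono_two hpq, ?_⟩
    intro i
    fin_cases i
    · simpa using hp
    · simpa using hq

lemma deltaRes_faces_iff {R F : Finset (Fin 2 × P)} :
    F ∈ (deltaRes 2 P R).faces ↔ F ⊆ R ∧ F ∉ (letterplace 2 P).carrier := Iff.rfl

lemma face_mk {R F : Finset (Fin 2 × P)} (hFR : F ⊆ R)
    (hF : ∀ p q : P, ((0:Fin 2), p) ∈ F → ((1:Fin 2), q) ∈ F → ¬ p ≤ q) :
    F ∈ (deltaRes 2 P R).faces := by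
  rw [deltaRes_faces_iff]
  refine ⟨hFR, fun hc => ?_⟩
  rw [letterplace_mem] at hc
  obtain ⟨p, q, hpq, hp, hq⟩ := hc
  exact hF p q hp hq hpq

lemma face_pairs {R F : Finset (Fin 2 × P)} (hface : F ∈ (deltaRes 2 P R).faces) :
    ∀ p q : P, ((0:Fin 2), p) ∈ F → ((1:Fin 2), q) ∈ F → ¬ p ≤ q := by
  intro p q hp hq hpq
  exact (deltaRes_faces_iff.1 hface).2 (letterplace_mem.2 ⟨p, q, hpq, hp, hq⟩)

lemma face_sub {R F : Finset (Fin 2 × P)} (hface : F ∈ (deltaRes 2 P R).faces) : F ⊆ R :=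
  (deltaRes_faces_iff.1 hface).1

lemma mem_part' {n : ℕ} {R : Finset (Fin n × P)} {i : Fin n} {p : P} :
    p ∈ part R i ↔ (i, p) ∈ R := by
  unfold part
  simp only [Finset.mem_image, Finset.mem_filter]
  constructor
  · rintro ⟨⟨a, b⟩, ⟨hR, ha⟩, hb⟩
    simp only at ha hb
    subst ha
    subst hb
    exact hR
  · intro hR
    exact ⟨(i, p), ⟨hR, rfl⟩, rfl⟩

lemma exists_min_le {B : Finset P} {b : P} (hb : b ∈ B) : ∃ m, m ∈ minSet B ∧ m ≤ b := by
  obtain ⟨m, hm, hmin⟩ : ∃ m ∈ B.filter (· ≤ b), ∀ x ∈ B.filter (· ≤ b), ¬ x < m := by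
    obtain ⟨m, hm1, hm2⟩ := Finset.exists_minimal (s := B.filter (· ≤ b))
      ⟨b, Finset.mem_filter.2 ⟨hb, le_refl b⟩⟩
    exact ⟨m, hm1, fun x hx hlt => lt_irrefl _ (lt_of_lt_of_le hlt (hm2 hx hlt.le))⟩
  obtain ⟨hmB, hmb⟩ := Finset.mem_filter.1 hm
  refine ⟨m, Finset.mem_filter.2 ⟨hmB, ?_⟩, hmb⟩
  intro c hc hcm
  by_contra hne
  exact hmin c (Finset.mem_filter.2 ⟨hc, hcm.trans hmb⟩)
    (lt_of_le_of_ne hcm (fun hx => hne hx.symm))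

lemma exists_max_ge {A : Finset P} {a : P} (ha : a ∈ A) : ∃ m, m ∈ maxSet A ∧ a ≤ m := by
  obtain ⟨m, hm, hmax⟩ : ∃ m ∈ A.filter (a ≤ ·), ∀ x ∈ A.filter (a ≤ ·), ¬ m < x := by
    obtain ⟨m, hm1, hm2⟩ := Finset.exists_maximal (s := A.filter (a ≤ ·))
      ⟨a, Finset.mem_filter.2 ⟨ha, le_refl a⟩⟩
    exact ⟨m, hm1, fun x hx hlt => lt_irrefl _ (lt_of_lt_of_le hlt (hm2 hx hlt.le))⟩
  obtain ⟨hmA, ham⟩ := Finset.mem_filter.1 hm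
  refine ⟨m, Finset.mem_filter.2 ⟨hmA, ?_⟩, ham⟩
  intro c hc hmc
  by_contra hne
  exact hmax c (Finset.mem_filter.2 ⟨hc, ham.trans hmc⟩) (lt_of_le_of_ne hmc hne)

lemma core (R : Finset (Fin 2 × P)) (h : ¬ subsetLE (part R 0) (part R 1)) :
    ∃ (z : Fin 2 × P) (D : Finset (Fin 2 × P)) (π : Fin 2 × P → Fin 2 × P),
      z ∈ R ∧ z ∉ D ∧ D ⊆ R ∧
      (∀ d ∈ D, π d ∈ R ∧ π d ∉ D ∧ π d ≠ d) ∧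
      (∀ F ∈ (deltaRes 2 P R).faces, ∀ d ∈ D, d ∈ F →
        insert (π d) F ∈ (deltaRes 2 P R).faces) ∧
      (∀ F ∈ (deltaRes 2 P R).faces, (∀ d ∈ D, d ∉ F) →
        insert z F ∈ (deltaRes 2 P R).faces) := by
  unfold subsetLE at h
  rw [not_and_or] at h
  push_neg at h
  rcases h with ⟨a0, ha0max, ha0⟩ | ⟨b0, hb0min, hb0⟩
  · -- Case I
    have ha0A : a0 ∈ part R 0 := (Finset.mem_filter.1 ha0max).1
    classical
    set φ : P → P := fun b => if hb : b ∈ part R 1 then Classical.choose (exists_min_le hb) else b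
      with hφdef
    have hφ : ∀ b ∈ part R 1, φ b ∈ minSet (part R 1) ∧ φ b ≤ b := by
      intro b hb
      rw [hφdef]
      simp only [dif_pos hb]
      exact Classical.choose_spec (exists_min_le hb)
    refine ⟨((0:Fin 2), a0), ((part R 1).filter (a0 ≤ ·)).image (fun b => ((1:Fin 2), b)),
      fun v => ((1:Fin 2), φ v.2), mem_part'.1 ha0A, ?_, ?_, ?_, ?_, ?_⟩
    · intro hc
      obtain ⟨b, _, hb⟩ := Finset.mem_image.1 hc
      exact absurd (congrArg Prod.fst hb) (by simp)
    · intro d hd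
      obtain ⟨b, hb, hbd⟩ := Finset.mem_image.1 hd
      obtain ⟨hbB, _⟩ := Finset.mem_filter.1 hb
      rw [← hbd]
      exact mem_part'.1 hbB
    · intro d hd
      obtain ⟨b, hb, hbd⟩ := Finset.mem_image.1 hd
      obtain ⟨hbB, hab⟩ := Finset.mem_filter.1 hb
      obtain ⟨hφmin, hφle⟩ := hφ b hbB
      subst hbd
      refine ⟨mem_part'.1 ((Finset.mem_filter.1 hφmin).1), ?_, ?_⟩
      · intro hc
        obtain ⟨b', hb', hbd'⟩ := Finset.mem_image.1 hc
        obtain ⟨hbB', hab'⟩ := Finset.mem_filter.1 hb'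
        have : b' = φ b := congrArg Prod.snd hbd'
        exact ha0 (φ b) hφmin (by rwa [this] at hab')
      · intro hc
        have : φ b = b := congrArg Prod.snd hc
        exact ha0 (φ b) hφmin (by rw [this]; exact hab)
    · -- fold
      intro F hF d hd hdF
      obtain ⟨b, hb, hbd⟩ := Finset.mem_image.1 hd
      obtain ⟨hbB, hab⟩ := Finset.mem_filter.1 hb
      obtain ⟨hφmin, hφle⟩ := hφ b hbB
      subst hbd
      refine face_mk (Finset.insert_subset
        (mem_part'.1 ((Finset.mem_filter.1 hφmin).1)) (face_sub hF)) ?_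
      intro p q hp hq hpq
      have hpF : ((0:Fin 2), p) ∈ F := by
        rcases Finset.mem_insert.1 hp with hc | hc
        · exact absurd (congrArg Prod.fst hc) (by simp)
        · exact hc
      rcases Finset.mem_insert.1 hq with hc | hcF
      · have hq' : q = φ b := congrArg Prod.snd hc
        exact face_pairs hF p b hpF hdF (le_trans (hq' ▸ hpq) hφle)
      · exact face_pairs hF p q hpF hcF hpq
    · -- cone
      intro F hF hDF
      refine face_mk (Finset.insert_subset (mem_part'.1 ha0A) (face_sub hF)) ?_
      intro p q hp hq hpq
      have hqF : ((1:Fin 2), q) ∈ F := by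
        rcases Finset.mem_insert.1 hq with hc | hc
        · exact absurd (congrArg Prod.fst hc) (by simp)
        · exact hc
      rcases Finset.mem_insert.1 hp with hc | hpF
      · have hp' : p = a0 := congrArg Prod.snd hc
        have hqB : q ∈ part R 1 := mem_part'.2 (face_sub hF hqF)
        have : ((1:Fin 2), q) ∈ ((part R 1).filter (a0 ≤ ·)).image (fun b => ((1:Fin 2), b)) :=
          Finset.mem_image.2 ⟨q, Finset.mem_filter.2 ⟨hqB, hp' ▸ hpq⟩, rfl⟩
        exact hDF _ this hqF
      · exact face_pairs hF p q hpF hqF hpq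
  · -- Case II
    have hb0B : b0 ∈ part R 1 := (Finset.mem_filter.1 hb0min).1
    classical
    set ψ : P → P := fun a => if ha : a ∈ part R 0 then Classical.choose (exists_max_ge ha) else a
      with hψdef
    have hψ : ∀ a ∈ part R 0, ψ a ∈ maxSet (part R 0) ∧ a ≤ ψ a := by
      intro a ha
      rw [hψdef]
      simp only [dif_pos ha]
      exact Classical.choose_spec (exists_max_ge ha)
    refine ⟨((1:Fin 2), b0), ((part R 0).filter (· ≤ b0)).image (fun a => ((0:Fin 2), a)),
      fun v => ((0:Fin 2), ψ v.2), mem_part'.1 hb0B, ?_, ?_, ?_, ?_, ?_⟩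
    · intro hc
      obtain ⟨a, _, hb⟩ := Finset.mem_image.1 hc
      exact absurd (congrArg Prod.fst hb) (by simp)
    · intro d hd
      obtain ⟨a, ha, had⟩ := Finset.mem_image.1 hd
      obtain ⟨haA, _⟩ := Finset.mem_filter.1 ha
      rw [← had]
      exact mem_part'.1 haA
    · intro d hd
      obtain ⟨a, ha, had⟩ := Finset.mem_image.1 hd
      obtain ⟨haA, hab⟩ := Finset.mem_filter.1 ha
      obtain ⟨hψmax, hψge⟩ := hψ a haA
      subst had
      refine ⟨mem_part'.1 ((Finset.mem_filter.1 hψmax).1), ?_, ?_⟩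
      · intro hc
        obtain ⟨a', ha', had'⟩ := Finset.mem_image.1 hc
        obtain ⟨haA', hab'⟩ := Finset.mem_filter.1 ha'
        have : a' = ψ a := congrArg Prod.snd had'
        exact hb0 (ψ a) hψmax (by rwa [this] at hab')
      · intro hc
        have : ψ a = a := congrArg Prod.snd hc
        exact hb0 (ψ a) hψmax (by rw [this]; exact hab)
    · -- fold
      intro F hF d hd hdF
      obtain ⟨a, ha, had⟩ := Finset.mem_image.1 hd
      obtain ⟨haA, hab0⟩ := Finset.mem_filter.1 ha
      obtain ⟨hψmax, hψge⟩ := hψ a haA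
      subst had
      refine face_mk (Finset.insert_subset
        (mem_part'.1 ((Finset.mem_filter.1 hψmax).1)) (face_sub hF)) ?_
      intro p q hp hq hpq
      have hqF : ((1:Fin 2), q) ∈ F := by
        rcases Finset.mem_insert.1 hq with hc | hc
        · exact absurd (congrArg Prod.fst hc) (by simp)
        · exact hc
      rcases Finset.mem_insert.1 hp with hc | hpF
      · have hp' : p = ψ a := congrArg Prod.snd hc
        exact face_pairs hF a q hdF hqF (le_trans hψge (hp' ▸ hpq))
      · exact face_pairs hF p q hpF hqF hpq
    · -- cone
      intro F hF hDF
      refine face_mk (Finset.insert_subset (mem_part'.1 hb0B) (face_sub hF)) ?_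
      intro p q hp hq hpq
      have hpF : ((0:Fin 2), p) ∈ F := by
        rcases Finset.mem_insert.1 hp with hc | hc
        · exact absurd (congrArg Prod.fst hc) (by simp)
        · exact hc
      rcases Finset.mem_insert.1 hq with hc | hqF
      · have hq' : q = b0 := congrArg Prod.snd hc
        have hpA : p ∈ part R 0 := mem_part'.2 (face_sub hF hpF)
        have : ((0:Fin 2), p) ∈ ((part R 0).filter (· ≤ b0)).image (fun a => ((0:Fin 2), a)) :=
          Finset.mem_image.2 ⟨p, Finset.mem_filter.2 ⟨hpA, hq' ▸ hpq⟩, rfl⟩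
        exact hDF _ this hpF
      · exact face_pairs hF p q hpF hqF hpq

end Final

/-- If the parts of `R ⊆ [2] × P` do not satisfy `R₁ ≤ R₂`,
then the restriction `Δ(2,P)|_R` is contractible, all of its reduced
cohomology vanishes, and consequently `β_{i,R}(L(2,P)) = 0` for all `i`. -/
theorem statement_9 {P : Type u} [PartialOrder P] [Fintype P] (k : Type w)
    [Field k] (R : Finset (Fin 2 × P))
    (h : ¬ subsetLE (part R 0) (part R 1)) :
    ContractibleSpace (SComplex.realization (deltaRes 2 P R)) ∧
    (∀ i : ℤ, SComplex.redCohomDim k (deltaRes 2 P R) i = 0) ∧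
    ∀ i : ℤ, multiBetti k (letterplace 2 P) i R = 0 := by
  obtain ⟨z, D, π, hzR, hzD, hDR, hπ, hfold, hcone⟩ := core R h
  have h0 : ∅ ∈ (deltaRes 2 P R).faces := by
    refine deltaRes_faces_iff.2 ⟨Finset.empty_subset R, fun hc => ?_⟩
    obtain ⟨c, _, hcm⟩ := hc
    exact absurd (hcm 0) (Finset.notMem_empty _)
  set gg : Fin 2 × P → Fin 2 × P := fun v => if v ∈ D then π v else v with hgg
  have hgface : ∀ F ∈ (deltaRes 2 P R).faces, F ∪ F.image gg ∈ (deltaRes 2 P R).faces := by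
    intro F hF
    suffices key : ∀ S : Finset (Fin 2 × P), S ⊆ F →
        F ∪ S.image gg ∈ (deltaRes 2 P R).faces by
      exact key F (le_refl F)
    intro S
    induction S using Finset.induction_on with
    | empty => intro _; simpa using hF
    | @insert a S ha ih =>
        intro hsub
        rw [Finset.image_insert]
        have hS := ih (fun x hx => hsub (Finset.mem_insert_of_mem hx))
        have haF : a ∈ F := hsub (Finset.mem_insert_self a S)
        by_cases haD : a ∈ D
        · rw [show gg a = π a from if_pos haD, Finset.union_insert]
          exact hfold _ hS a haD (Finset.mem_union_left _ haF)
        · rw [show gg a = a from if_neg haD, Finset.union_insert,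
            Finset.insert_eq_self.2 (Finset.mem_union_left _ haF)]
          exact hS
  have hzimg : ∀ F ∈ (deltaRes 2 P R).faces,
      insert z (F.image gg) ∈ (deltaRes 2 P R).faces := by
    intro F hF
    have himg : F.image gg ∈ (deltaRes 2 P R).faces :=
      (deltaRes 2 P R).down_closed (hgface F hF) Finset.subset_union_right
    refine hcone _ himg ?_
    intro d hd hc
    obtain ⟨u, hu, huv⟩ := Finset.mem_image.1 hc
    by_cases huD : u ∈ D
    · rw [show gg u = π u from if_pos huD] at huv
      exact (hπ u huD).2.1 (by rw [huv]; exact hd)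
    · rw [show gg u = u from if_neg huD] at huv
      exact huD (by rw [huv]; exact hd)
  refine ⟨contractible_of_fold (deltaRes 2 P R) gg z h0 hgface hzimg, ?_, ?_⟩
  · intro i
    haveI : Finite (Finset (Fin 2 × P)) := Finite.of_fintype _
    haveI : Finite (SComplex.Face (deltaRes 2 P R) (i-1+1)) := Subtype.finite
    unfold SComplex.redCohomDim
    apply Nat.sub_eq_zero_of_le
    have hmono : LinearMap.ker (SComplex.coboundary k (deltaRes 2 P R) ((i-1)+1))
        ≤ LinearMap.range (SComplex.coboundary k (deltaRes 2 P R) (i-1)) := by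
      intro f hf
      obtain ⟨c, hc⟩ := exactE k D.card (deltaRes 2 P R) D z π rfl hzD
        (fun d hd => ⟨(hπ d hd).2.1, (hπ d hd).2.2⟩) hfold hcone (i-1) f (LinearMap.mem_ker.1 hf)
      exact ⟨c, hc⟩
    have hle := Submodule.finrank_mono hmono
    have key : ∀ j j' : ℤ, j = j' →
        Module.finrank k ↥(LinearMap.ker (SComplex.coboundary k (deltaRes 2 P R) j))
          = Module.finrank k ↥(LinearMap.ker (SComplex.coboundary k (deltaRes 2 P R) j')) := by
      rintro j j' rfl
      rfl
    exact le_trans (le_of_eq (key i (i-1+1) (by ring))) hle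
  · intro i
    haveI : Finite (Finset (Fin 2 × P)) := Finite.of_fintype _
    haveI : Finite (SqfIdeal.KBasis (letterplace 2 P) R (i+1-1)) := Subtype.finite
    unfold multiBetti
    apply Nat.sub_eq_zero_of_le
    have hfoldK : ∀ T : Finset (Fin 2 × P), T ⊆ R → ∀ d ∈ D, d ∈ T →
        T ∉ (letterplace 2 P).carrier → insert (π d) T ∉ (letterplace 2 P).carrier := by
      intro T hTR d hd hdT hTc
      exact (deltaRes_faces_iff.1 (hfold T (deltaRes_faces_iff.2 ⟨hTR, hTc⟩) d hd hdT)).2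
    have hconeK : ∀ T : Finset (Fin 2 × P), T ⊆ R → (∀ d ∈ D, d ∉ T) →
        T ∉ (letterplace 2 P).carrier → insert z T ∉ (letterplace 2 P).carrier := by
      intro T hTR hDT hTc
      exact (deltaRes_faces_iff.1 (hcone T (deltaRes_faces_iff.2 ⟨hTR, hTc⟩) hDT)).2
    have hmono : LinearMap.ker (SqfIdeal.koszulD k (letterplace 2 P) R ((i+1)-1))
        ≤ LinearMap.range (SqfIdeal.koszulD k (letterplace 2 P) R (i+1)) := by
      intro f hf
      obtain ⟨c, hc⟩ := exactK k (letterplace 2 P) z π D.card R D rfl hDR hzR hzD hπ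
        hfoldK hconeK (i+1) f (LinearMap.mem_ker.1 hf)
      exact ⟨c, hc⟩
    have hle := Submodule.finrank_mono hmono
    have key : ∀ j j' : ℤ, j = j' →
        Module.finrank k ↥(LinearMap.ker (SqfIdeal.koszulD k (letterplace 2 P) R j))
          = Module.finrank k ↥(LinearMap.ker (SqfIdeal.koszulD k (letterplace 2 P) R j')) := by
      rintro j j' rfl
      rfl
    exact le_trans (le_of_eq (key i (i+1-1) (by ring))) hle

end
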